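/- arXiv:2208.14729 — 6 statements merged into one kernel-verified Lean document; each statement's English description precedes it below -/
import Mathlib

section
/- For every nondeterministic finite automaton with translucent letters (NFAwtl) A there exists a non-returning nondeterministic finite automaton with translucent letters (nrNFAwtl) B such that L(B) = L(A). Moreover, if A is deterministic (a DFAwtl), then B can be chosen to be deterministic (an nrDFAwtl). -/
/-- The end-of-tape behaviour of a non-returning automaton with translucent
letters: either a set of states to continue with (the empty set meaning that
the transition is undefined), or the operation `Accept`. -/
inductive EndMove (Q : Type) where
  | cont : Set Q → EndMove Q
  | accept : EndMove Q

/-- A nondeterministic finite automaton with translucent letters (NFAwtl).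
`τ q` is the set of letters that are translucent for state `q`. -/
structure NFAwtl (Q : Type) (A : Type) where
  τ : Q → Set A
  I : Set Q
  F : Set Q
  δ : Q → A → Set Q
  tr_compat : ∀ q a, a ∈ τ q → δ q a = ∅

namespace NFAwtl

variable {Q A : Type}

/-- A single computation step of an NFAwtl: the first letter (from the left)
that is not translucent for the current state is read and deleted. -/
inductive Step (M : NFAwtl Q A) : Q × List A → Q × List A → Prop
  | read (q q' : Q) (u v : List A) (a : A) :
      (∀ b ∈ u, b ∈ M.τ q) → a ∉ M.τ q → q' ∈ M.δ q a →
      Step M (q, u ++ a :: v) (q', u ++ v)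

/-- The language accepted by an NFAwtl: words from which some computation
reaches a configuration whose remaining tape contents is translucent for a
final state. -/
def lang (M : NFAwtl Q A) : Set (List A) :=
  { w | ∃ q₀ ∈ M.I, ∃ q w', Relation.ReflTransGen (Step M) (q₀, w) (q, w') ∧
        (∀ b ∈ w', b ∈ M.τ q) ∧ q ∈ M.F }

/-- An NFAwtl is deterministic (a DFAwtl) if it has a single initial state and
at most one transition for each state/letter pair. -/
def IsDet (M : NFAwtl Q A) : Prop :=
  (∃ q, M.I = {q}) ∧ ∀ q a, (M.δ q a).Subsingleton

end NFAwtl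

/-- A configuration of a non-returning automaton with translucent letters:
`conf x q w` means the tape contains `x ++ w` followed by the end-of-tape
marker, the current state is `q`, and the head is positioned at the first
letter of `w`; `accept` is the accepting halting configuration. -/
inductive NrConf (Q : Type) (A : Type) where
  | conf : List A → Q → List A → NrConf Q A
  | accept : NrConf Q A

/-- A non-returning nondeterministic finite automaton with translucent
letters (nrNFAwtl). -/
structure NrNFAwtl (Q : Type) (A : Type) where
  τ : Q → Set A
  I : Set Q
  δ : Q → A → Set Q
  δend : Q → EndMove Q
  tr_compat : ∀ q a, a ∈ τ q → δ q a = ∅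

namespace NrNFAwtl

variable {Q A : Type}

/-- A single computation step of an nrNFAwtl. -/
inductive Step (M : NrNFAwtl Q A) : NrConf Q A → NrConf Q A → Prop
  | read (x : List A) (q q' : Q) (u v : List A) (a : A) :
      (∀ b ∈ u, b ∈ M.τ q) → a ∉ M.τ q → q' ∈ M.δ q a →
      Step M (.conf x q (u ++ a :: v)) (.conf (x ++ u) q' v)
  | restart (x w : List A) (q q' : Q) (S : Set Q) :
      (∀ b ∈ w, b ∈ M.τ q) → M.δend q = .cont S → q' ∈ S →
      Step M (.conf x q w) (.conf [] q' (x ++ w))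
  | accept (x w : List A) (q : Q) :
      (∀ b ∈ w, b ∈ M.τ q) → M.δend q = .accept →
      Step M (.conf x q w) .accept

/-- The language accepted by an nrNFAwtl. -/
def lang (M : NrNFAwtl Q A) : Set (List A) :=
  { w | ∃ q₀ ∈ M.I, Relation.ReflTransGen (Step M) (.conf [] q₀ w) .accept }

/-- An nrNFAwtl is deterministic (an nrDFAwtl) if it has a single initial
state and, for every state and every letter (including the end-of-tape
marker), at most one transition is available. -/
def IsDet (M : NrNFAwtl Q A) : Prop :=
  (∃ q, M.I = {q}) ∧ (∀ q a, (M.δ q a).Subsingleton) ∧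
  (∀ q S, M.δend q = .cont S → S.Subsingleton)

end NrNFAwtl

/-- `L` is accepted by some NFAwtl. -/
def AcceptedByNFAwtl {A : Type} [Fintype A] (L : Set (List A)) : Prop :=
  ∃ (Q : Type) (_ : Fintype Q) (M : NFAwtl Q A), M.lang = L

/-- `L` is accepted by some DFAwtl. -/
def AcceptedByDFAwtl {A : Type} [Fintype A] (L : Set (List A)) : Prop :=
  ∃ (Q : Type) (_ : Fintype Q) (M : NFAwtl Q A), M.IsDet ∧ M.lang = L

/-- `L` is accepted by some nrNFAwtl. -/
def AcceptedByNrNFAwtl {A : Type} [Fintype A] (L : Set (List A)) : Prop :=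
  ∃ (Q : Type) (_ : Fintype Q) (M : NrNFAwtl Q A), M.lang = L

/-- `L` is accepted by some nrDFAwtl. -/
def AcceptedByNrDFAwtl {A : Type} [Fintype A] (L : Set (List A)) : Prop :=
  ∃ (Q : Type) (_ : Fintype Q) (M : NrNFAwtl Q A), M.IsDet ∧ M.lang = L

section Construction

variable {Q A : Type}

/-- `M` can accept starting from state `q` with tape `w`. -/
def MAcc (M : NFAwtl Q A) (q : Q) (w : List A) : Prop :=
  ∃ q' w', Relation.ReflTransGen (NFAwtl.Step M) (q, w) (q', w') ∧
    (∀ b ∈ w', b ∈ M.τ q') ∧ q' ∈ M.F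

open Classical in
/-- The non-returning simulation of `M`. The `true` copy of a state reads a
letter; the `false` copy (with everything translucent) restarts. -/
noncomputable def nrOf (M : NFAwtl Q A) : NrNFAwtl (Q × Bool) A where
  τ := fun p => match p with
    | (q, true) => M.τ q
    | (_, false) => Set.univ
  I := (fun q => (q, true)) '' M.I
  δ := fun p a => match p with
    | (q, true) => (fun q' => (q', false)) '' M.δ q a
    | (_, false) => ∅
  δend := fun p => match p with
    | (q, true) => if q ∈ M.F then .accept else .cont ∅
    | (q, false) => .cont {(q, true)}
  tr_compat := by
    rintro ⟨q, b⟩ a h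
    cases b
    · rfl
    · show (fun q' => (q', false)) '' M.δ q a = ∅
      rw [M.tr_compat q a h, Set.image_empty]

lemma nrOf_sim_step (M : NFAwtl Q A) {c c' : Q × List A}
    (h : NFAwtl.Step M c c') :
    Relation.ReflTransGen (NrNFAwtl.Step (nrOf M))
      (.conf [] (c.1, true) c.2) (.conf [] (c'.1, true) c'.2) := by
  cases h with
  | read q q' u v a h1 h2 h3 =>
    have s1 : NrNFAwtl.Step (nrOf M) (.conf [] (q, true) (u ++ a :: v))
        (.conf ([] ++ u) (q', false) v) := by
      exact NrNFAwtl.Step.read [] (q, true) (q', false) u v a h1 h2 ⟨q', h3, rfl⟩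
    have s2 : NrNFAwtl.Step (nrOf M) (.conf ([] ++ u) (q', false) v)
        (.conf [] (q', true) (([] ++ u) ++ v)) := by
      refine NrNFAwtl.Step.restart _ _ _ _ {(q', true)} ?_ rfl rfl
      intro b _; trivial
    simp only [List.nil_append] at s1 s2
    exact Relation.ReflTransGen.head s1 (Relation.ReflTransGen.single s2)

lemma nrOf_sim (M : NFAwtl Q A) {c c' : Q × List A}
    (h : Relation.ReflTransGen (NFAwtl.Step M) c c') :
    Relation.ReflTransGen (NrNFAwtl.Step (nrOf M))
      (.conf [] (c.1, true) c.2) (.conf [] (c'.1, true) c'.2) := by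
  induction h with
  | refl => exact Relation.ReflTransGen.refl
  | tail _ hstep ih => exact ih.trans (nrOf_sim_step M hstep)

/-- The invariant for the backward direction. -/
def nrInv (M : NFAwtl Q A) : NrConf (Q × Bool) A → Prop
  | .conf x (q, true) w => x = [] → MAcc M q w
  | .conf x (q, false) w => MAcc M q (x ++ w)
  | .accept => True

lemma nrOf_back_step (M : NFAwtl Q A) {c c' : NrConf (Q × Bool) A}
    (h : NrNFAwtl.Step (nrOf M) c c') (h' : nrInv M c') : nrInv M c := by
  cases h with
  | read x p p' u v a h1 h2 h3 =>
    obtain ⟨q, b⟩ := p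
    cases b
    · exact absurd h3 (Set.notMem_empty _)
    · obtain ⟨q', hq', rfl⟩ := h3
      intro hx
      subst hx
      have hMst : NFAwtl.Step M (q, u ++ a :: v) (q', u ++ v) :=
        NFAwtl.Step.read q q' u v a h1 h2 hq'
      obtain ⟨r, w', hr, hw', hF⟩ := (by simpa [nrInv] using h' : MAcc M q' (u ++ v))
      exact ⟨r, w', Relation.ReflTransGen.head hMst hr, hw', hF⟩
  | restart x w p p' S h1 h2 h3 =>
    obtain ⟨q, b⟩ := p
    cases b
    · have : S = {(q, true)} := by
        simpa [nrOf] using h2.symm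
      subst this
      obtain rfl : p' = (q, true) := h3
      exact h' rfl
    · classical
      have : (if q ∈ M.F then EndMove.accept else EndMove.cont ∅) = .cont S := h2
      by_cases hF : q ∈ M.F
      · simp [hF] at this
      · simp [hF] at this
        subst this
        exact absurd h3 (Set.notMem_empty _)
  | accept x w p h1 h2 =>
    obtain ⟨q, b⟩ := p
    cases b
    · exact absurd h2 (by simp [nrOf])
    · have hF : q ∈ M.F := by
        by_contra hF
        classical
        have : (if q ∈ M.F then EndMove.accept else EndMove.cont ∅)
            = EndMove.accept := h2
        simp [hF] at this
      intro _
      exact ⟨q, w, Relation.ReflTransGen.refl, h1, hF⟩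

lemma nrOf_back (M : NFAwtl Q A) {c : NrConf (Q × Bool) A}
    (h : Relation.ReflTransGen (NrNFAwtl.Step (nrOf M)) c .accept) :
    nrInv M c := by
  induction h using Relation.ReflTransGen.head_induction_on with
  | refl => trivial
  | head hstep _ ih => exact nrOf_back_step M hstep ih

lemma nrOf_lang (M : NFAwtl Q A) : (nrOf M).lang = M.lang := by
  ext w
  constructor
  · rintro ⟨p₀, hp₀, hrun⟩
    obtain ⟨q₀, hq₀, rfl⟩ := hp₀
    obtain ⟨q', w', hr, hw', hF⟩ := nrOf_back M hrun rfl
    exact ⟨q₀, hq₀, q', w', hr, hw', hF⟩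
  · rintro ⟨q₀, hq₀, q', w', hr, hw', hF⟩
    refine ⟨(q₀, true), ⟨q₀, hq₀, rfl⟩, ?_⟩
    refine (nrOf_sim M hr).tail ?_
    exact NrNFAwtl.Step.accept [] w' (q', true) hw' (by simp [nrOf, hF])

lemma nrOf_det (M : NFAwtl Q A) (h : M.IsDet) : (nrOf M).IsDet := by
  obtain ⟨⟨q₀, hI⟩, hδ⟩ := h
  refine ⟨⟨(q₀, true), by simp [nrOf, hI]⟩, ?_, ?_⟩
  · rintro ⟨q, b⟩ a
    cases b
    · exact fun x hx => absurd hx (Set.notMem_empty _)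
    · rintro _ ⟨s, hs, rfl⟩ _ ⟨t, ht, rfl⟩
      rw [hδ q a hs ht]
  · rintro ⟨q, b⟩ S hS
    cases b
    · have : {(q, true)} = S := by simpa [nrOf] using hS
      subst this
      exact Set.subsingleton_singleton
    · by_cases hF : q ∈ M.F
      · simp [nrOf, hF] at hS
      · have : S = ∅ := by simpa [nrOf, hF] using hS.symm
        subst this
        exact Set.subsingleton_empty

end Construction

/-- For every NFAwtl `M` there exists an nrNFAwtl `B` with
`L(B) = L(M)`; moreover, if `M` is deterministic, then `B` can be chosen to be
deterministic. -/
theorem nfawtl_to_nrnfawtl {A : Type} [Fintype A] {Q : Type} [Fintype Q]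
    (M : NFAwtl Q A) :
    ∃ (Q' : Type) (_ : Fintype Q') (B : NrNFAwtl Q' A),
      B.lang = M.lang ∧ (M.IsDet → B.IsDet) := by
  exact ⟨Q × Bool, inferInstance, nrOf M, nrOf_lang M, nrOf_det M⟩
end

section
/- Every nrNFAwtl A can be effectively converted into an nrNFAwtl C such that L(C) = L(A), every computation of C starting from an initial configuration is finite (C never gets into an infinite computation), and C accepts only in configurations whose tape contents has been read and deleted completely (i.e., C executes an Accept step only when the remaining tape contents is empty). Moreover, if A is an nrDFAwtl, then C can be chosen to be an nrDFAwtl. -/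
section Construction

variable {Q A : Type}

/-- State space of the normalized automaton. -/
abbrev QC (Q : Type) : Type := (Q × Finset Q) ⊕ Unit

variable [DecidableEq Q] (M : NrNFAwtl Q A)

/-- The set of end-of-tape successors of `(q, R)` in the normalized automaton. -/
def Cset (q : Q) (R : Finset Q) : Set (QC Q) :=
  match M.δend q with
  | .accept => {.inr ()}
  | .cont S => {s' | ∃ q' ∈ S, q' ∉ R ∧ s' = .inl (q', insert q' R)}

/-- The normalized automaton. -/
def normC : NrNFAwtl (QC Q) A where
  τ s := match s with
    | .inl (q, _) => M.τ q
    | .inr _ => ∅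
  I := {s | ∃ q ∈ M.I, s = .inl (q, ∅)}
  δ s a := match s with
    | .inl (q, _) => {s' | ∃ q' ∈ M.δ q a, s' = .inl (q', ∅)}
    | .inr _ => {.inr ()}
  δend s := match s with
    | .inl (q, R) => .cont (Cset M q R)
    | .inr _ => .accept
  tr_compat := by
    rintro (⟨q, R⟩ | ⟨⟩) a ha
    · have h := M.tr_compat q a ha
      ext s
      simp only [h, Set.mem_empty_iff_false, iff_false]
      rintro ⟨q', hq', rfl⟩
      exact hq'
    · exact absurd ha (Set.notMem_empty a)

@[simp] lemma normC_τ_inl (q : Q) (R : Finset Q) :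
    (normC M).τ (.inl (q, R)) = M.τ q := rfl

@[simp] lemma normC_τ_inr (u : Unit) :
    (normC M).τ (.inr u) = ∅ := rfl

@[simp] lemma normC_δ_inl (q : Q) (R : Finset Q) (a : A) :
    (normC M).δ (.inl (q, R)) a = {s' | ∃ q' ∈ M.δ q a, s' = .inl (q', ∅)} := rfl

@[simp] lemma normC_δ_inr (u : Unit) (a : A) :
    (normC M).δ (.inr u) a = {.inr ()} := rfl

@[simp] lemma normC_δend_inl (q : Q) (R : Finset Q) :
    (normC M).δend (.inl (q, R)) = .cont (Cset M q R) := rfl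

@[simp] lemma normC_δend_inr (u : Unit) :
    (normC M).δend (.inr u) = .accept := rfl

lemma Cset_accept {q : Q} (R : Finset Q) (h : M.δend q = .accept) :
    Cset M q R = {.inr ()} := by
  unfold Cset; rw [h]

lemma Cset_cont {q : Q} (R : Finset Q) {S : Set Q} (h : M.δend q = .cont S) :
    Cset M q R = {s' | ∃ q' ∈ S, q' ∉ R ∧ s' = .inl (q', insert q' R)} := by
  unfold Cset; rw [h]

/-- Runs ending in acceptance, counted by length. -/
inductive RunN (N : NrNFAwtl Q A) : ℕ → NrConf Q A → Prop
  | zero : RunN N 0 .accept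
  | succ {n : ℕ} {c c' : NrConf Q A} :
      N.Step c c' → RunN N n c' → RunN N (n + 1) c

lemma reach_iff_runN {Q' : Type} (N : NrNFAwtl Q' A) (c : NrConf Q' A) :
    Relation.ReflTransGen N.Step c .accept ↔ ∃ n, RunN N n c := by
  constructor
  · intro h
    induction h using Relation.ReflTransGen.head_induction_on with
    | refl => exact ⟨0, .zero⟩
    | head hstep _ ih =>
      obtain ⟨n, hn⟩ := ih
      exact ⟨n + 1, .succ hstep hn⟩
  · rintro ⟨n, h⟩
    induction h with
    | zero => exact .refl
    | succ hstep _ ih => exact .head hstep ih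

/-- In state `f = inr ()`, the normalized automaton reads the whole tape and accepts. -/
lemma flush (z : List A) :
    Relation.ReflTransGen (normC M).Step (.conf [] (.inr ()) z) .accept := by
  induction z with
  | nil =>
    exact .single (NrNFAwtl.Step.accept [] [] _ (by simp) rfl)
  | cons a z ih =>
    refine .head ?_ ih
    have h := NrNFAwtl.Step.read (M := normC M) [] (.inr ()) (.inr ()) [] z a
      (by simp) (by simp) (by exact rfl)
    simpa using h

/-- Forward simulation: accepting runs of `M` can be simulated by `normC M`. -/
lemma sim_forward : ∀ n : ℕ, ∀ (x : List A) (q : Q) (w : List A) (R : Finset Q),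
    RunN M n (.conf x q w) →
    (∀ s ∈ R, ∀ m, RunN M m (.conf [] s (x ++ w)) → n ≤ m) →
    Relation.ReflTransGen (normC M).Step (.conf x (.inl (q, R)) w) .accept := by
  intro n
  induction n using Nat.strong_induction_on with
  | _ n ih =>
    intro x q w R hrun HR
    cases hrun with
    | @succ k c0 c' hstep htail =>
      cases hstep with
      | read _ _ q' u v a hu ha hq' =>
        refine Relation.ReflTransGen.head
          (NrNFAwtl.Step.read (M := normC M) x (.inl (q, R)) (.inl (q', ∅)) u v a hu ha
            ⟨q', hq', rfl⟩) ?_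
        exact ih k (by omega) (x ++ u) q' v ∅ htail (by simp)
      | restart x w q q' S hw he hq' =>
        by_cases hqR : q' ∈ R
        · have := HR q' hqR k htail
          omega
        · classical
          have hex : ∃ m, RunN M m (.conf [] q' (x ++ w)) := ⟨k, htail⟩
          haveI : DecidablePred fun m => RunN M m (.conf [] q' (x ++ w)) :=
            Classical.decPred _
          set m' := Nat.find hex with hm'
          have hm'run : RunN M m' (.conf [] q' (x ++ w)) := Nat.find_spec hex
          have hm'min : ∀ m, RunN M m (.conf [] q' (x ++ w)) → m' ≤ m :=
            fun m hm => Nat.find_min' hex hm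
          have hm'lt : m' < k + 1 := lt_of_le_of_lt (hm'min k htail) (by omega)
          refine Relation.ReflTransGen.head
            (NrNFAwtl.Step.restart x w (.inl (q, R)) (.inl (q', insert q' R))
              (Cset M q R) hw rfl ?_) ?_
          · rw [Cset_cont M R he]
            exact ⟨q', hq', hqR, rfl⟩
          · refine ih m' hm'lt [] q' (x ++ w) (insert q' R) hm'run ?_
            intro s hs m hm
            rw [List.nil_append] at hm
            rcases Finset.mem_insert.mp hs with rfl | hsR
            · exact hm'min m hm
            · have := HR s hsR m hm
              omega
      | accept x w q hw he =>
        refine Relation.ReflTransGen.head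
          (NrNFAwtl.Step.restart x w (.inl (q, R)) (.inr ()) (Cset M q R) hw rfl ?_)
          (flush M (x ++ w))
        rw [Cset_accept M R he]
        rfl

/-- Backward simulation: accepting runs of `normC M` yield accepting runs of `M`. -/
lemma sim_backward {n : ℕ} {c : NrConf (QC Q) A} (h : RunN (normC M) n c) :
    ∀ (x : List A) (q : Q) (R : Finset Q) (w : List A),
      c = .conf x (.inl (q, R)) w →
      Relation.ReflTransGen M.Step (.conf x q w) .accept := by
  induction h with
  | zero =>
    intro x q R w heq
    exact absurd heq (by simp)
  | succ hstep htail ih =>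
    intro x q R w heq
    subst heq
    cases hstep with
    | read x s s' u v a hu ha hs' =>
      obtain ⟨q', hq', rfl⟩ := hs'
      exact Relation.ReflTransGen.head
        (NrNFAwtl.Step.read x q q' u v a hu ha hq') (ih (x ++ u) q' ∅ v rfl)
    | restart x w s s' S hw he hs' =>
      rw [normC_δend_inl] at he
      injection he with hSeq
      subst hSeq
      cases hM : M.δend q with
      | accept =>
        exact .single (NrNFAwtl.Step.accept x w q hw hM)
      | cont S0 =>
        rw [Cset_cont M R hM] at hs'
        obtain ⟨q', hq', hnR, rfl⟩ := hs'
        exact Relation.ReflTransGen.head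
          (NrNFAwtl.Step.restart x w q q' S0 hw hM hq')
          (ih [] q' (insert q' R) (x ++ w) rfl)
    | accept x w s hw he =>
      rw [normC_δend_inl] at he
      cases he

variable [Fintype Q]

lemma normC_lang : (normC M).lang = M.lang := by
  ext w
  constructor
  · rintro ⟨s₀, ⟨q₀, hq₀, rfl⟩, hreach⟩
    obtain ⟨n, hrun⟩ := (reach_iff_runN (normC M) _).mp hreach
    exact ⟨q₀, hq₀, sim_backward M hrun [] q₀ ∅ w rfl⟩
  · rintro ⟨q₀, hq₀, hreach⟩
    obtain ⟨n, hrun⟩ := (reach_iff_runN M _).mp hreach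
    exact ⟨.inl (q₀, ∅), ⟨q₀, hq₀, rfl⟩,
      sim_forward M n [] q₀ w ∅ hrun (by simp)⟩

/-- Rank of a state of the normalized automaton. -/
def rk : QC Q → ℕ
  | .inl (_, R) => Fintype.card Q + 1 - R.card
  | .inr _ => 0

/-- Rank of a configuration of the normalized automaton. -/
def rank : NrConf (QC Q) A → ℕ
  | .conf x s w => (x.length + w.length) * (Fintype.card Q + 2) + rk s
  | .accept => 0

lemma rk_le (s : QC Q) : rk s ≤ Fintype.card Q + 1 := by
  cases s with
  | inl p => exact Nat.sub_le _ _
  | inr u => exact Nat.zero_le _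

lemma rank_decreasing {c c' : NrConf (QC Q) A}
    (h : (normC M).Step c c') (hc' : c' ≠ .accept) : rank c' < rank c := by
  cases h with
  | read x s s' u v a hu ha hs' =>
    have h1 : rk s' ≤ Fintype.card Q + 1 := rk_le s'
    simp only [rank, List.length_append, List.length_cons]
    have key : (x.length + (u.length + (v.length + 1))) * (Fintype.card Q + 2)
        = (x.length + u.length + v.length) * (Fintype.card Q + 2)
          + (Fintype.card Q + 2) := by ring
    rw [key]
    omega
  | restart x w s s' S hw he hs' =>
    cases s with
    | inr u =>
      rw [normC_δend_inr] at he
      cases he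
    | inl p =>
      obtain ⟨q, R⟩ := p
      rw [normC_δend_inl] at he
      injection he with hSeq
      subst hSeq
      have hRcard : R.card ≤ Fintype.card Q := Finset.card_le_univ R
      have hrks : rk (Sum.inl (q, R) : QC Q) = Fintype.card Q + 1 - R.card := rfl
      have hlt : rk s' < rk (Sum.inl (q, R) : QC Q) := by
        cases hM : M.δend q with
        | accept =>
          rw [Cset_accept M R hM] at hs'
          rw [Set.mem_singleton_iff] at hs'
          subst hs'
          simp only [rk]
          omega
        | cont S0 =>
          rw [Cset_cont M R hM] at hs'
          obtain ⟨q', hq', hnR, rfl⟩ := hs'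
          have hcard : (insert q' R).card = R.card + 1 :=
            Finset.card_insert_of_notMem hnR
          simp only [rk, hcard]
          omega
      simp only [rank, List.length_append, List.length_nil]
      have e : (0 + (x.length + w.length)) = x.length + w.length := by omega
      rw [e]
      omega
  | accept x w s hw he =>
    exact absurd rfl hc'

lemma no_infinite :
    ¬ ∃ f : ℕ → NrConf (QC Q) A,
        (∃ q₀ ∈ (normC M).I, ∃ w : List A, f 0 = NrConf.conf [] q₀ w) ∧
        ∀ n : ℕ, (normC M).Step (f n) (f (n + 1)) := by
  rintro ⟨f, -, hstep⟩
  have hne : ∀ n, f n ≠ .accept := by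
    intro n h
    have hs := hstep n
    rw [h] at hs
    cases hs
  have hdec : ∀ n, rank (f (n + 1)) < rank (f n) :=
    fun n => rank_decreasing M (hstep n) (hne (n + 1))
  have hbound : ∀ n, rank (f n) + n ≤ rank (f 0) := by
    intro n
    induction n with
    | zero => omega
    | succ k ihk =>
      have := hdec k
      omega
  have := hbound (rank (f 0) + 1)
  omega

lemma inr_empty (s₀ : QC Q) (hs₀ : ∃ q ∈ M.I, s₀ = Sum.inl (q, (∅ : Finset Q)))
    (w : List A) :
    ∀ c, Relation.ReflTransGen (normC M).Step (.conf [] s₀ w) c →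
      ∀ x v, c = .conf x (.inr ()) v → x = [] := by
  intro c h
  induction h with
  | refl =>
    rintro x v heq
    obtain ⟨q, -, rfl⟩ := hs₀
    injection heq with h1 h2 h3
    cases h2
  | tail hsteps hstep ih =>
    rintro x v heq
    cases hstep with
    | read x0 s s' u v0 a hu ha hs' =>
      injection heq with h1 h2 h3
      subst h1
      cases s with
      | inl p =>
        obtain ⟨q', hq', habs⟩ := hs'
        cases (habs.symm.trans h2)
      | inr uu =>
        cases uu
        have hx0 : x0 = [] := ih x0 _ rfl
        have hu0 : u = [] := by
          cases u with
          | nil => rfl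
          | cons b u' => exact absurd (hu b (by simp)) (Set.notMem_empty b)
        simp [hx0, hu0]
    | restart x0 w0 s s' S hw he hs' =>
      injection heq with h1 h2 h3
      exact h1.symm
    | accept x0 w0 s hw he =>
      exact absurd heq (by simp)

lemma normC_det (h : M.IsDet) : (normC M).IsDet := by
  obtain ⟨⟨q0, hI⟩, hδ, hend⟩ := h
  refine ⟨⟨.inl (q0, ∅), ?_⟩, ?_, ?_⟩
  · ext s
    show (∃ q ∈ M.I, s = .inl (q, ∅)) ↔ _
    rw [hI]
    simp
  · rintro (⟨q, R⟩ | ⟨⟩) a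
    · rintro s1 ⟨q1, h1, rfl⟩ s2 ⟨q2, h2, rfl⟩
      rw [hδ q a h1 h2]
    · intro s1 h1 s2 h2
      simp only [normC_δ_inr, Set.mem_singleton_iff] at h1 h2
      rw [h1, h2]
  · rintro (⟨q, R⟩ | ⟨⟩) S hS
    · rw [normC_δend_inl] at hS
      injection hS with hSeq
      subst hSeq
      cases hM : M.δend q with
      | accept =>
        rw [Cset_accept M R hM]
        exact Set.subsingleton_singleton
      | cont S0 =>
        rw [Cset_cont M R hM]
        rintro s1 ⟨q1, h1, hn1, rfl⟩ s2 ⟨q2, h2, hn2, rfl⟩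
        rw [hend q S0 hM h1 h2]
    · rw [normC_δend_inr] at hS
      cases hS

end Construction

/-- Every nrNFAwtl `M` can be converted into an equivalent
nrNFAwtl `C` that never gets into an infinite computation (starting from an
initial configuration) and that executes an `Accept` step only when its tape
contents has been read and deleted completely; if `M` is deterministic, then
`C` can be chosen deterministic. -/
theorem nrnfawtl_normalization {A : Type} [Fintype A] {Q : Type} [Fintype Q]
    (M : NrNFAwtl Q A) :
    ∃ (Q' : Type) (_ : Fintype Q') (C : NrNFAwtl Q' A),
      C.lang = M.lang ∧
      (¬ ∃ f : ℕ → NrConf Q' A,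
          (∃ q₀ ∈ C.I, ∃ w : List A, f 0 = NrConf.conf [] q₀ w) ∧
          ∀ n : ℕ, C.Step (f n) (f (n + 1))) ∧
      (∀ q₀ ∈ C.I, ∀ (w x v : List A) (q : Q'),
          Relation.ReflTransGen C.Step (NrConf.conf [] q₀ w) (NrConf.conf x q v) →
          C.Step (NrConf.conf x q v) NrConf.accept → x = [] ∧ v = []) ∧
      (M.IsDet → C.IsDet) := by
  haveI : DecidableEq Q := Classical.decEq Q
  refine ⟨QC Q, inferInstance, normC M, normC_lang M, no_infinite M, ?_, normC_det M⟩
  intro q₀ hq₀ w x v q hreach hstep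
  cases hstep with
  | accept _ _ _ hv he =>
    cases q with
    | inl p =>
      obtain ⟨qq, R⟩ := p
      rw [normC_δend_inl] at he
      cases he
    | inr u =>
      cases u
      constructor
      · exact inr_empty M q₀ hq₀ w _ hreach x v rfl
      · cases v with
        | nil => rfl
        | cons b v' => exact absurd (hv b (by simp)) (Set.notMem_empty b)
end

section
/- A language L ⊆ {a}* over a one-letter alphabet is accepted by some nrNFAwtl if and only if L is a regular language. -/
section Aux

open Relation

/-! ### Auxiliary lemmas for NFAs -/

theorem NFA.mem_evalFrom_iff' {α σ : Type*} (N : NFA α σ) (S : Set σ) (x : List α) (t : σ) :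
    t ∈ N.evalFrom S x ↔ ∃ s ∈ S, t ∈ N.evalFrom {s} x := by
  induction x generalizing S with
  | nil => simp
  | cons a x ih =>
    have hcons : ∀ T : Set σ, N.evalFrom T (a :: x) = N.evalFrom (N.stepSet T a) x := fun _ => rfl
    rw [hcons, ih]
    constructor
    · rintro ⟨u, hu, htu⟩
      rw [NFA.mem_stepSet] at hu
      obtain ⟨s, hs, hus⟩ := hu
      refine ⟨s, hs, ?_⟩
      rw [hcons, ih]
      refine ⟨u, ?_, htu⟩
      rw [NFA.mem_stepSet]
      exact ⟨s, rfl, hus⟩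
    · rintro ⟨s, hs, ht⟩
      rw [hcons, ih] at ht
      obtain ⟨u, hu, htu⟩ := ht
      rw [NFA.mem_stepSet] at hu
      obtain ⟨s', hs', hus'⟩ := hu
      rw [Set.mem_singleton_iff] at hs'
      subst hs'
      refine ⟨u, ?_, htu⟩
      rw [NFA.mem_stepSet]
      exact ⟨s', hs, hus'⟩

namespace NrNFAwtl

variable {Q : Type} (M : NrNFAwtl Q Unit)

/-- `()` is translucent for `q`. -/
def T (q : Q) : Prop := () ∈ M.τ q

/-- A restart move available mid-word (requires translucency). -/
def Eps (q q' : Q) : Prop := M.T q ∧ ∃ S, M.δend q = .cont S ∧ q' ∈ S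

/-- A restart move available at the end of the word. -/
def Eps0 (q q' : Q) : Prop := ∃ S, M.δend q = .cont S ∧ q' ∈ S

theorem Eps.toEps0 {M : NrNFAwtl Q Unit} {q q' : Q} (h : M.Eps q q') : M.Eps0 q q' := h.2

/-- Abstract acceptance predicate for a unary nrNFAwtl starting in state `q`
with tape `w`. -/
inductive AccN (M : NrNFAwtl Q Unit) : Q → List Unit → Prop
  | acc (q : Q) (w : List Unit) : (w = [] ∨ M.T q) → M.δend q = .accept → AccN M q w
  | eps (q q' : Q) (w : List Unit) : (w = [] ∨ M.T q) → M.Eps0 q q' → AccN M q' w → AccN M q w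
  | read (q q' : Q) (w : List Unit) (a : Unit) : ¬ M.T q → q' ∈ M.δ q a → AccN M q' w →
      AccN M q (a :: w)

theorem tcond_iff {q : Q} {w : List Unit} :
    (∀ b ∈ w, b ∈ M.τ q) ↔ (w = [] ∨ M.T q) := by
  cases w with
  | nil => simp
  | cons a w =>
    simp only [List.cons_ne_nil, false_or]
    constructor
    · intro h; exact h () (by cases a; exact List.mem_cons_self)
    · intro h b _; cases b; exact h

theorem step_inv {q : Q} {w : List Unit} {c : NrConf Q Unit}
    (h : M.Step (.conf [] q w) c) :
    (∃ q' a v, w = a :: v ∧ ¬ M.T q ∧ q' ∈ M.δ q a ∧ c = .conf [] q' v) ∨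
    (∃ q' S, (w = [] ∨ M.T q) ∧ M.δend q = .cont S ∧ q' ∈ S ∧ c = .conf [] q' w) ∨
    ((w = [] ∨ M.T q) ∧ M.δend q = .accept ∧ c = .accept) := by
  generalize hc : (NrConf.conf [] q w : NrConf Q Unit) = c₀ at h
  cases h with
  | read x q₁ q' u v a hu ha hq =>
    injection hc with hx hq₁ hw
    subst hx; subst hq₁; subst hw
    have hT : ¬ M.T q := by cases a; exact ha
    have hu0 : u = [] := by
      cases u with
      | nil => rfl
      | cons b u => exact absurd (by cases b; exact hu () (List.mem_cons_self)) hT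
    subst hu0
    exact Or.inl ⟨q', a, v, rfl, hT, hq, by simp⟩
  | restart x w₁ q₁ q' S hw hS hq' =>
    injection hc with hx hq₁ hw₁
    subst hx; subst hq₁; subst hw₁
    exact Or.inr (Or.inl ⟨q', S, (M.tcond_iff).mp hw, hS, hq', by simp⟩)
  | accept x w₁ q₁ hw hacc =>
    injection hc with hx hq₁ hw₁
    subst hx; subst hq₁; subst hw₁
    exact Or.inr (Or.inr ⟨(M.tcond_iff).mp hw, hacc, rfl⟩)

theorem accN_iff {q : Q} {w : List Unit} :
    Relation.ReflTransGen (M.Step) (.conf [] q w) .accept ↔ AccN M q w := by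
  constructor
  · intro h
    have main : ∀ c : NrConf Q Unit, Relation.ReflTransGen (M.Step) c .accept →
        ∀ q w, c = .conf [] q w → AccN M q w := by
      intro c h
      induction h using Relation.ReflTransGen.head_induction_on with
      | refl => intro q w hc; exact absurd hc (by simp)
      | head hstep _ ih =>
        intro q w hc
        subst hc
        rcases M.step_inv hstep with ⟨q', a, v, hw, hT, hq', hc'⟩ |
          ⟨q', S, hcond, hS, hq', hc'⟩ | ⟨hcond, hacc, hc'⟩
        · subst hw; exact AccN.read q q' v a hT hq' (ih q' v hc')
        · exact AccN.eps q q' w hcond ⟨S, hS, hq'⟩ (ih q' w hc')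
        · exact AccN.acc q w hcond hacc
    exact main _ h q w rfl
  · intro h
    induction h with
    | acc q w hcond hacc =>
      exact Relation.ReflTransGen.single (Step.accept [] w q ((M.tcond_iff).mpr hcond) hacc)
    | eps q q' w hcond heps _ ih =>
      obtain ⟨S, hS, hq'⟩ := heps
      exact Relation.ReflTransGen.head
        (by simpa using Step.restart [] w q q' S ((M.tcond_iff).mpr hcond) hS hq') ih
    | read q q' w a hT hq' _ ih =>
      have : M.Step (.conf [] q ([] ++ a :: w)) (.conf ([] ++ []) q' w) :=
        Step.read [] q q' [] w a (by simp) (by cases a; exact hT) hq'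
      exact Relation.ReflTransGen.head (by simpa using this) ih

/-- The NFA over `Option Q` simulating a unary nrNFAwtl; `none` is an accepting
sink entered upon an early `Accept`. -/
def toNFA : NFA Unit (Option Q) where
  step s _ :=
    match s with
    | none => {none}
    | some q => {s' | (∃ p q', ReflTransGen M.Eps q p ∧ ¬ M.T p ∧ q' ∈ M.δ p () ∧ s' = some q')
        ∨ (s' = none ∧ ∃ p, ReflTransGen M.Eps q p ∧ M.T p ∧ M.δend p = .accept)}
  start := some '' M.I
  accept := {s | s = none ∨ ∃ q p, s = some q ∧ ReflTransGen M.Eps0 q p ∧ M.δend p = .accept}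

/-- Acceptance of `w` by `M.toNFA` from the single state `s`. -/
def NAcc (s : Option Q) (w : List Unit) : Prop :=
  ∃ t ∈ M.toNFA.accept, t ∈ M.toNFA.evalFrom {s} w

theorem nAcc_nil {s : Option Q} : M.NAcc s [] ↔ s ∈ M.toNFA.accept := by
  simp [NAcc]

theorem nAcc_cons {s : Option Q} {a : Unit} {w : List Unit} :
    M.NAcc s (a :: w) ↔ ∃ t ∈ M.toNFA.step s a, M.NAcc t w := by
  have hcons : M.toNFA.evalFrom {s} (a :: w) = M.toNFA.evalFrom (M.toNFA.stepSet {s} a) w := rfl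
  constructor
  · rintro ⟨u, hu, huev⟩
    rw [hcons, NFA.mem_evalFrom_iff'] at huev
    obtain ⟨t, ht, hut⟩ := huev
    rw [NFA.mem_stepSet] at ht
    obtain ⟨s', hs', hts'⟩ := ht
    rw [Set.mem_singleton_iff] at hs'; subst hs'
    exact ⟨t, hts', u, hu, hut⟩
  · rintro ⟨t, ht, u, hu, hut⟩
    refine ⟨u, hu, ?_⟩
    rw [hcons, NFA.mem_evalFrom_iff']
    exact ⟨t, by rw [NFA.mem_stepSet]; exact ⟨s, rfl, ht⟩, hut⟩

theorem nAcc_none (w : List Unit) : M.NAcc none w := by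
  induction w with
  | nil => exact (M.nAcc_nil).mpr (Or.inl rfl)
  | cons a w ih => exact (M.nAcc_cons).mpr ⟨none, rfl, ih⟩

theorem accN_of_eps_chain {q p : Q} {w : List Unit} (h : ReflTransGen M.Eps q p)
    (hp : AccN M p w) : AccN M q w := by
  induction h using Relation.ReflTransGen.head_induction_on with
  | refl => exact hp
  | head hstep _ ih => exact AccN.eps _ _ _ (Or.inr hstep.1) hstep.toEps0 ih

theorem accN_of_eps0_chain_nil {q p : Q} (h : ReflTransGen M.Eps0 q p)
    (hp : AccN M p []) : AccN M q [] := by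
  induction h using Relation.ReflTransGen.head_induction_on with
  | refl => exact hp
  | head hstep _ ih => exact AccN.eps _ _ _ (Or.inl rfl) hstep ih

theorem step_mono {q q' : Q} (h : M.Eps q q') (a : Unit) :
    M.toNFA.step (some q') a ⊆ M.toNFA.step (some q) a := by
  intro t ht
  rcases ht with ⟨p, q'', hchain, hT, hq'', hteq⟩ | ⟨hteq, p, hchain, hT, hacc⟩
  · exact Or.inl ⟨p, q'', Relation.ReflTransGen.head h hchain, hT, hq'', hteq⟩
  · exact Or.inr ⟨hteq, p, Relation.ReflTransGen.head h hchain, hT, hacc⟩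

theorem accN_iff_nAcc {q : Q} {w : List Unit} : AccN M q w ↔ M.NAcc (some q) w := by
  constructor
  · intro h
    induction h with
    | acc q w hcond hacc =>
      cases w with
      | nil => exact (M.nAcc_nil).mpr (Or.inr ⟨q, q, rfl, Relation.ReflTransGen.refl, hacc⟩)
      | cons a w =>
        have hT : M.T q := hcond.resolve_left (by simp)
        exact (M.nAcc_cons).mpr ⟨none,
          Or.inr ⟨rfl, q, Relation.ReflTransGen.refl, hT, hacc⟩, M.nAcc_none w⟩
    | eps q q' w hcond heps _ ih =>
      cases w with
      | nil =>
        rw [nAcc_nil] at ih ⊢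
        rcases ih with hn | ⟨q₁, p, hq₁, hchain, hacc⟩
        · exact absurd hn (by simp)
        · injection hq₁ with hq₁; subst hq₁
          exact Or.inr ⟨q, p, rfl, Relation.ReflTransGen.head heps hchain, hacc⟩
      | cons a w =>
        have hT : M.T q := hcond.resolve_left (by simp)
        rw [nAcc_cons] at ih ⊢
        obtain ⟨t, ht, hacc⟩ := ih
        exact ⟨t, M.step_mono ⟨hT, heps⟩ a ht, hacc⟩
    | read q q' w a hT hq' _ ih =>
      exact (M.nAcc_cons).mpr ⟨some q',
        Or.inl ⟨q, q', Relation.ReflTransGen.refl, hT, by cases a; exact hq', rfl⟩, ih⟩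
  · intro h
    induction w generalizing q with
    | nil =>
      rw [nAcc_nil] at h
      rcases h with hn | ⟨q₁, p, hq₁, hchain, hacc⟩
      · exact absurd hn (by simp)
      · injection hq₁ with hq₁; subst hq₁
        exact M.accN_of_eps0_chain_nil hchain (AccN.acc p [] (Or.inl rfl) hacc)
    | cons a w ih =>
      rw [nAcc_cons] at h
      obtain ⟨t, ht, hacc⟩ := h
      rcases ht with ⟨p, q'', hchain, hT, hq'', hteq⟩ | ⟨hteq, p, hchain, hT, haccp⟩
      · subst hteq
        exact M.accN_of_eps_chain hchain
          (AccN.read p q'' w a hT (by cases a; exact hq'') (ih hacc))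
      · exact M.accN_of_eps_chain hchain (AccN.acc p (a :: w) (Or.inr hT) haccp)

theorem toNFA_accepts : M.toNFA.accepts = M.lang := by
  ext w
  rw [NFA.mem_accepts]
  constructor
  · rintro ⟨t, ht, htev⟩
    rw [NFA.mem_evalFrom_iff'] at htev
    obtain ⟨s, hs, hts⟩ := htev
    obtain ⟨q₀, hq₀, rfl⟩ := hs
    exact ⟨q₀, hq₀, (M.accN_iff).mpr ((M.accN_iff_nAcc).mpr ⟨t, ht, hts⟩)⟩
  · rintro ⟨q₀, hq₀, h⟩
    obtain ⟨t, ht, hts⟩ := (M.accN_iff_nAcc).mp ((M.accN_iff).mp h)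
    refine ⟨t, ht, ?_⟩
    rw [NFA.mem_evalFrom_iff']
    exact ⟨some q₀, ⟨q₀, hq₀, rfl⟩, hts⟩

/-! ### From a DFA to an nrNFAwtl -/

open Classical in
/-- The nrNFAwtl simulating a DFA: no letters are translucent, reading goes
left to right, and accepting happens exactly at the end-of-tape marker in an
accepting state. -/
noncomputable def ofDFA {σ A : Type} (d : DFA A σ) : NrNFAwtl σ A where
  τ _ := ∅
  I := {d.start}
  δ q a := {d.step q a}
  δend q := if q ∈ d.accept then .accept else .cont ∅
  tr_compat := by simp

theorem ofDFA_fwd {σ A : Type} (d : DFA A σ) {c : NrConf σ A}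
    (h : Relation.ReflTransGen ((ofDFA d).Step) c .accept) :
    ∀ x q w, c = .conf x q w → d.evalFrom q w ∈ d.accept := by
  induction h using Relation.ReflTransGen.head_induction_on with
  | refl => intro x q w hc; exact absurd hc (by simp)
  | head hstep _ ih =>
    intro x q w hc
    subst hc
    cases hstep with
    | read x q q' u v a hu hT hq' =>
      have hu0 : u = [] := by
        cases u with
        | nil => rfl
        | cons b u => exact absurd (hu b (List.mem_cons_self)) (by simp [ofDFA])
      subst hu0
      have hq'' : q' = d.step q a := by simpa [ofDFA] using hq'
      subst hq''
      simpa using ih (x ++ []) (d.step q a) v rfl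
    | restart x w q q' S hw hS hq' =>
      exfalso
      by_cases hq : q ∈ d.accept
      · simp [ofDFA, hq] at hS
      · simp only [ofDFA, if_neg hq, EndMove.cont.injEq] at hS
        subst hS
        exact hq'
    | accept x w q hw hacc =>
      have hw0 : w = [] := by
        cases w with
        | nil => rfl
        | cons b w => exact absurd (hw b (List.mem_cons_self)) (by simp [ofDFA])
      subst hw0
      by_cases hq : q ∈ d.accept
      · simpa using hq
      · simp [ofDFA, hq] at hacc

theorem ofDFA_bwd {σ A : Type} (d : DFA A σ) {q : σ} {w : List A}
    (h : d.evalFrom q w ∈ d.accept) (x : List A) :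
    Relation.ReflTransGen ((ofDFA d).Step) (.conf x q w) .accept := by
  induction w generalizing q x with
  | nil =>
    refine Relation.ReflTransGen.single (NrNFAwtl.Step.accept x [] q (by simp) ?_)
    simp only [DFA.evalFrom_nil] at h
    simp [ofDFA, h]
  | cons a w ih =>
    have hstep : (ofDFA d).Step (.conf x q ([] ++ a :: w)) (.conf (x ++ []) (d.step q a) w) :=
      NrNFAwtl.Step.read x q (d.step q a) [] w a (by simp) (by simp [ofDFA]) (by simp [ofDFA])
    exact Relation.ReflTransGen.head (by simpa using hstep) (ih h (x ++ []))

theorem ofDFA_lang {σ A : Type} (d : DFA A σ) : (ofDFA d).lang = d.accepts := by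
  ext w
  constructor
  · rintro ⟨q₀, hq₀, h⟩
    have hq₀' : q₀ = d.start := hq₀
    subst hq₀'
    exact ofDFA_fwd d h [] d.start w rfl
  · intro h
    exact ⟨d.start, rfl, ofDFA_bwd d h []⟩

end NrNFAwtl

end Aux

/-- A language over a one-letter alphabet is accepted by some
nrNFAwtl if and only if it is regular. -/
theorem unary_nrnfawtl_iff_regular (L : Language Unit) :
    AcceptedByNrNFAwtl (L : Set (List Unit)) ↔ L.IsRegular := by
  constructor
  · rintro ⟨Q, fQ, M, hM⟩
    haveI : Fintype (Set (Option Q)) := by classical exact inferInstance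
    refine ⟨Set (Option Q), inferInstance, M.toNFA.toDFA, ?_⟩
    rw [NFA.toDFA_correct, M.toNFA_accepts]
    exact hM
  · rintro ⟨σ, fσ, d, hd⟩
    exact ⟨σ, fσ, NrNFAwtl.ofDFA d, by rw [NrNFAwtl.ofDFA_lang, hd]⟩
end

section
/- If L₁ and L₂ are languages over a common alphabet Σ that are both accepted by nrNFAwtls, then L₁ ∪ L₂ is accepted by an nrNFAwtl; i.e., the class of languages accepted by nrNFAwtls is closed under union. -/
namespace NrNFAwtl

variable {Q₁ Q₂ A : Type}

/-- Disjoint union of two nrNFAwtls. -/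
def sumM (M₁ : NrNFAwtl Q₁ A) (M₂ : NrNFAwtl Q₂ A) : NrNFAwtl (Q₁ ⊕ Q₂) A where
  τ := Sum.elim M₁.τ M₂.τ
  I := Sum.inl '' M₁.I ∪ Sum.inr '' M₂.I
  δ q a := match q with
    | .inl q => Sum.inl '' M₁.δ q a
    | .inr q => Sum.inr '' M₂.δ q a
  δend q := match q with
    | .inl q => match M₁.δend q with
      | .cont S => .cont (Sum.inl '' S)
      | .accept => .accept
    | .inr q => match M₂.δend q with
      | .cont S => .cont (Sum.inr '' S)
      | .accept => .accept
  tr_compat := by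
    rintro (q | q) a ha
    · simp only [Sum.elim_inl] at ha
      simp [M₁.tr_compat q a ha]
    · simp only [Sum.elim_inr] at ha
      simp [M₂.tr_compat q a ha]

def liftL : NrConf Q₁ A → NrConf (Q₁ ⊕ Q₂) A
  | .conf x q w => .conf x (.inl q) w
  | .accept => .accept

def liftR : NrConf Q₂ A → NrConf (Q₁ ⊕ Q₂) A
  | .conf x q w => .conf x (.inr q) w
  | .accept => .accept

lemma stepL {M₁ : NrNFAwtl Q₁ A} {M₂ : NrNFAwtl Q₂ A} {c c' : NrConf Q₁ A}
    (h : Step M₁ c c') : Step (sumM M₁ M₂) (liftL c) (liftL c') := by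
  cases h with
  | read x q q' u v a hu ha hq =>
      exact .read x _ _ u v a hu ha ⟨q', hq, rfl⟩
  | restart x w q q' S hw hS hq =>
      exact .restart x w _ (Sum.inl q') (Sum.inl '' S) hw (by simp [sumM, hS]) ⟨q', hq, rfl⟩
  | accept x w q hw hS =>
      exact .accept x w _ hw (by simp [sumM, hS])

lemma stepR {M₁ : NrNFAwtl Q₁ A} {M₂ : NrNFAwtl Q₂ A} {c c' : NrConf Q₂ A}
    (h : Step M₂ c c') : Step (sumM M₁ M₂) (liftR c) (liftR c') := by
  cases h with
  | read x q q' u v a hu ha hq =>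
      exact .read x _ _ u v a hu ha ⟨q', hq, rfl⟩
  | restart x w q q' S hw hS hq =>
      exact .restart x w _ (Sum.inr q') (Sum.inr '' S) hw (by simp [sumM, hS]) ⟨q', hq, rfl⟩
  | accept x w q hw hS =>
      exact .accept x w _ hw (by simp [sumM, hS])

lemma stepL_inv {M₁ : NrNFAwtl Q₁ A} {M₂ : NrNFAwtl Q₂ A} {x : List A} {q : Q₁}
    {w : List A} {d : NrConf (Q₁ ⊕ Q₂) A}
    (h : Step (sumM M₁ M₂) (.conf x (.inl q) w) d) :
    ∃ c', d = liftL c' ∧ Step M₁ (.conf x q w) c' := by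
  cases h with
  | read x q q' u v a hu ha hq =>
      obtain ⟨p, hp, rfl⟩ := hq
      exact ⟨.conf (x ++ u) p v, rfl, .read x q p u v a hu ha hp⟩
  | restart x w q q' S hw hS hq =>
      simp only [sumM] at hS
      cases h1 : M₁.δend q with
      | cont S₁ =>
          rw [h1] at hS
          cases hS
          obtain ⟨p, hp, rfl⟩ := hq
          exact ⟨.conf [] p (x ++ w), rfl, .restart x w q p S₁ hw h1 hp⟩
      | accept => rw [h1] at hS; cases hS
  | accept x w q hw hS =>
      simp only [sumM] at hS
      cases h1 : M₁.δend q with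
      | cont S₁ => rw [h1] at hS; cases hS
      | accept => exact ⟨.accept, rfl, .accept x w q hw h1⟩

lemma stepR_inv {M₁ : NrNFAwtl Q₁ A} {M₂ : NrNFAwtl Q₂ A} {x : List A} {q : Q₂}
    {w : List A} {d : NrConf (Q₁ ⊕ Q₂) A}
    (h : Step (sumM M₁ M₂) (.conf x (.inr q) w) d) :
    ∃ c', d = liftR c' ∧ Step M₂ (.conf x q w) c' := by
  cases h with
  | read x q q' u v a hu ha hq =>
      obtain ⟨p, hp, rfl⟩ := hq
      exact ⟨.conf (x ++ u) p v, rfl, .read x q p u v a hu ha hp⟩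
  | restart x w q q' S hw hS hq =>
      simp only [sumM] at hS
      cases h1 : M₂.δend q with
      | cont S₁ =>
          rw [h1] at hS
          cases hS
          obtain ⟨p, hp, rfl⟩ := hq
          exact ⟨.conf [] p (x ++ w), rfl, .restart x w q p S₁ hw h1 hp⟩
      | accept => rw [h1] at hS; cases hS
  | accept x w q hw hS =>
      simp only [sumM] at hS
      cases h1 : M₂.δend q with
      | cont S₁ => rw [h1] at hS; cases hS
      | accept => exact ⟨.accept, rfl, .accept x w q hw h1⟩

lemma rtgL_inv {M₁ : NrNFAwtl Q₁ A} {M₂ : NrNFAwtl Q₂ A} {c : NrConf Q₁ A}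
    (h : Relation.ReflTransGen (Step (sumM M₁ M₂)) (liftL c) .accept) :
    Relation.ReflTransGen (Step M₁) c .accept := by
  generalize hd : (liftL c : NrConf (Q₁ ⊕ Q₂) A) = d at h
  induction h using Relation.ReflTransGen.head_induction_on generalizing c with
  | refl =>
      cases c with
      | accept => exact .refl
      | conf x q w => cases hd
  | head hstep _ ih =>
      cases c with
      | accept => cases hd; cases hstep
      | conf x q w =>
          cases hd
          obtain ⟨c', rfl, hs⟩ := stepL_inv hstep
          exact .head hs (ih rfl)

lemma rtgR_inv {M₁ : NrNFAwtl Q₁ A} {M₂ : NrNFAwtl Q₂ A} {c : NrConf Q₂ A}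
    (h : Relation.ReflTransGen (Step (sumM M₁ M₂)) (liftR c) .accept) :
    Relation.ReflTransGen (Step M₂) c .accept := by
  generalize hd : (liftR c : NrConf (Q₁ ⊕ Q₂) A) = d at h
  induction h using Relation.ReflTransGen.head_induction_on generalizing c with
  | refl =>
      cases c with
      | accept => exact .refl
      | conf x q w => cases hd
  | head hstep _ ih =>
      cases c with
      | accept => cases hd; cases hstep
      | conf x q w =>
          cases hd
          obtain ⟨c', rfl, hs⟩ := stepR_inv hstep
          exact .head hs (ih rfl)

lemma lang_sumM (M₁ : NrNFAwtl Q₁ A) (M₂ : NrNFAwtl Q₂ A) :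
    (sumM M₁ M₂).lang = M₁.lang ∪ M₂.lang := by
  ext w
  constructor
  · rintro ⟨q₀, hq₀, h⟩
    rcases hq₀ with ⟨p, hp, rfl⟩ | ⟨p, hp, rfl⟩
    · exact Or.inl ⟨p, hp, rtgL_inv (c := .conf [] p w) h⟩
    · exact Or.inr ⟨p, hp, rtgR_inv (c := .conf [] p w) h⟩
  · rintro (⟨p, hp, h⟩ | ⟨p, hp, h⟩)
    · refine ⟨.inl p, Or.inl ⟨p, hp, rfl⟩, ?_⟩
      have := Relation.ReflTransGen.lift (r := Step M₁) liftL (fun a b => stepL (M₂ := M₂)) _ _ h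
      exact this
    · refine ⟨.inr p, Or.inr ⟨p, hp, rfl⟩, ?_⟩
      have := Relation.ReflTransGen.lift (r := Step M₂) liftR (fun a b => stepR (M₁ := M₁)) _ _ h
      exact this

end NrNFAwtl

/-- The class of languages accepted by nrNFAwtls is closed
under union. -/
theorem nrNFAwtl_closed_under_union {A : Type} [Fintype A]
    (L₁ L₂ : Set (List A))
    (h₁ : AcceptedByNrNFAwtl L₁) (h₂ : AcceptedByNrNFAwtl L₂) :
    AcceptedByNrNFAwtl (L₁ ∪ L₂) := by
  obtain ⟨Q₁, f₁, M₁, rfl⟩ := h₁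
  obtain ⟨Q₂, f₂, M₂, rfl⟩ := h₂
  exact ⟨Q₁ ⊕ Q₂, inferInstance, M₁.sumM M₂, M₁.lang_sumM M₂⟩
end

section
/- If L₁ ⊆ Σ₁* and L₂ ⊆ Σ₂* are languages over disjoint alphabets Σ₁ and Σ₂ that are both accepted by nrNFAwtls, then the shuffle sh(L₁, L₂) ⊆ (Σ₁ ∪ Σ₂)* is accepted by an nrNFAwtl; i.e., the class of languages accepted by nrNFAwtls is closed under disjoint shuffle. -/
/-- `IsShuffle u v w` says that `w` is an interleaving (shuffle) of `u` and `v`. -/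
inductive IsShuffle {A : Type} : List A → List A → List A → Prop
  | nil : IsShuffle [] [] []
  | left (a : A) (u v w : List A) : IsShuffle u v w → IsShuffle (a :: u) v (a :: w)
  | right (a : A) (u v w : List A) : IsShuffle u v w → IsShuffle u (a :: v) (a :: w)

section ShuffleConstruction

variable {A₁ A₂ : Type}

/-- Projection of a word over `A₁ ⊕ A₂` onto `A₁`. -/
def projL : List (A₁ ⊕ A₂) → List A₁ := List.filterMap Sum.getLeft?

/-- Projection of a word over `A₁ ⊕ A₂` onto `A₂`. -/
def projR : List (A₁ ⊕ A₂) → List A₂ := List.filterMap Sum.getRight?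

@[simp] lemma projL_nil : projL ([] : List (A₁ ⊕ A₂)) = [] := rfl
@[simp] lemma projR_nil : projR ([] : List (A₁ ⊕ A₂)) = [] := rfl

@[simp] lemma projL_cons_inl (a : A₁) (l : List (A₁ ⊕ A₂)) :
    projL (Sum.inl a :: l) = a :: projL l := by simp [projL, Sum.getLeft?]

@[simp] lemma projL_cons_inr (a : A₂) (l : List (A₁ ⊕ A₂)) :
    projL (Sum.inr a :: l) = projL l := rfl

@[simp] lemma projR_cons_inl (a : A₁) (l : List (A₁ ⊕ A₂)) :
    projR (Sum.inl a :: l) = projR l := rfl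

@[simp] lemma projR_cons_inr (a : A₂) (l : List (A₁ ⊕ A₂)) :
    projR (Sum.inr a :: l) = a :: projR l := by simp [projR, Sum.getRight?]

@[simp] lemma projL_append (l m : List (A₁ ⊕ A₂)) :
    projL (l ++ m) = projL l ++ projL m := List.filterMap_append ..

@[simp] lemma projR_append (l m : List (A₁ ⊕ A₂)) :
    projR (l ++ m) = projR l ++ projR m := List.filterMap_append ..

lemma mem_projL {a : A₁} {l : List (A₁ ⊕ A₂)} : a ∈ projL l ↔ Sum.inl a ∈ l := by
  induction l with
  | nil => simp
  | cons b t ih => cases b <;> simp_all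

lemma mem_projR {a : A₂} {l : List (A₁ ⊕ A₂)} : a ∈ projR l ↔ Sum.inr a ∈ l := by
  induction l with
  | nil => simp
  | cons b t ih => cases b <;> simp_all

lemma projL_split {w : List (A₁ ⊕ A₂)} {u v : List A₁} {a : A₁}
    (h : projL w = u ++ a :: v) :
    ∃ U V, w = U ++ Sum.inl a :: V ∧ projL U = u ∧ projL V = v := by
  induction w generalizing u with
  | nil => cases u <;> simp_all
  | cons b t ih =>
    cases b with
    | inl c =>
      rw [projL_cons_inl] at h
      cases u with
      | nil =>
        simp only [List.nil_append, List.cons.injEq] at h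
        obtain ⟨rfl, rfl⟩ := h
        exact ⟨[], t, rfl, rfl, rfl⟩
      | cons u₀ u' =>
        simp only [List.cons_append, List.cons.injEq] at h
        obtain ⟨rfl, h⟩ := h
        obtain ⟨U, V, rfl, hU, hV⟩ := ih h
        exact ⟨Sum.inl c :: U, V, rfl, by simp [hU], hV⟩
    | inr c =>
      rw [projL_cons_inr] at h
      obtain ⟨U, V, rfl, hU, hV⟩ := ih h
      exact ⟨Sum.inr c :: U, V, rfl, by simp [hU], hV⟩

lemma projR_split {w : List (A₁ ⊕ A₂)} {u v : List A₂} {a : A₂}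
    (h : projR w = u ++ a :: v) :
    ∃ U V, w = U ++ Sum.inr a :: V ∧ projR U = u ∧ projR V = v := by
  induction w generalizing u with
  | nil => cases u <;> simp_all
  | cons b t ih =>
    cases b with
    | inr c =>
      rw [projR_cons_inr] at h
      cases u with
      | nil =>
        simp only [List.nil_append, List.cons.injEq] at h
        obtain ⟨rfl, rfl⟩ := h
        exact ⟨[], t, rfl, rfl, rfl⟩
      | cons u₀ u' =>
        simp only [List.cons_append, List.cons.injEq] at h
        obtain ⟨rfl, h⟩ := h
        obtain ⟨U, V, rfl, hU, hV⟩ := ih h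
        exact ⟨Sum.inr c :: U, V, rfl, by simp [hU], hV⟩
    | inl c =>
      rw [projR_cons_inl] at h
      obtain ⟨U, V, rfl, hU, hV⟩ := ih h
      exact ⟨Sum.inl c :: U, V, rfl, by simp [hU], hV⟩

lemma shuffle_projL_aux {u' v' z : List (A₁ ⊕ A₂)} (h : IsShuffle u' v' z)
    (hv : ∀ x ∈ v', ∃ a, x = Sum.inr a) : projL z = projL u' := by
  induction h with
  | nil => rfl
  | left a u v w _ ih =>
    cases a <;> simp [ih (fun x hx => hv x hx)]
  | right a u v w _ ih =>
    obtain ⟨b, rfl⟩ := hv a List.mem_cons_self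
    simpa using ih (fun x hx => hv x (List.mem_cons_of_mem _ hx))

lemma shuffle_projR_aux {u' v' z : List (A₁ ⊕ A₂)} (h : IsShuffle u' v' z)
    (hu : ∀ x ∈ u', ∃ a, x = Sum.inl a) : projR z = projR v' := by
  induction h with
  | nil => rfl
  | right a u v w _ ih =>
    cases a <;> simp [ih (fun x hx => hu x hx)]
  | left a u v w _ ih =>
    obtain ⟨b, rfl⟩ := hu a List.mem_cons_self
    simpa using ih (fun x hx => hu x (List.mem_cons_of_mem _ hx))

@[simp] lemma projL_map_inl (u : List A₁) :
    projL (u.map (Sum.inl : A₁ → A₁ ⊕ A₂)) = u := by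
  induction u <;> simp_all

@[simp] lemma projR_map_inr (v : List A₂) :
    projR (v.map (Sum.inr : A₂ → A₁ ⊕ A₂)) = v := by
  induction v <;> simp_all

@[simp] lemma projL_map_inr (v : List A₂) :
    projL (v.map (Sum.inr : A₂ → A₁ ⊕ A₂)) = [] := by
  induction v <;> simp_all

@[simp] lemma projR_map_inl (u : List A₁) :
    projR (u.map (Sum.inl : A₁ → A₁ ⊕ A₂)) = [] := by
  induction u <;> simp_all

lemma shuffle_projL {u : List A₁} {v : List A₂} {z : List (A₁ ⊕ A₂)}
    (h : IsShuffle (u.map Sum.inl) (v.map Sum.inr) z) : projL z = u := by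
  simpa using shuffle_projL_aux h (by simp)

lemma shuffle_projR {u : List A₁} {v : List A₂} {z : List (A₁ ⊕ A₂)}
    (h : IsShuffle (u.map Sum.inl) (v.map Sum.inr) z) : projR z = v := by
  simpa using shuffle_projR_aux h (by simp)

lemma shuffle_self (z : List (A₁ ⊕ A₂)) :
    IsShuffle ((projL z).map Sum.inl) ((projR z).map Sum.inr) z := by
  induction z with
  | nil => exact .nil
  | cons b t ih =>
    cases b with
    | inl a => simpa using IsShuffle.left (Sum.inl a) _ _ _ ih
    | inr a => simpa using IsShuffle.right (Sum.inr a) _ _ _ ih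

variable {Q₁ Q₂ : Type} (M₁ : NrNFAwtl Q₁ A₁) (M₂ : NrNFAwtl Q₂ A₂)

/-- The shuffle automaton: first simulate `M₁` treating all `A₂`-letters as
translucent, then (when `M₁` would accept) restart into `M₂`, treating all
`A₁`-letters as translucent. -/
def shAut : NrNFAwtl (Q₁ ⊕ Q₂) (A₁ ⊕ A₂) where
  τ := Sum.elim (fun q => Sum.inl '' M₁.τ q ∪ Set.range Sum.inr)
                (fun q => Set.range Sum.inl ∪ Sum.inr '' M₂.τ q)
  I := Sum.inl '' M₁.I
  δ := fun p b => match p, b with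
    | .inl q, .inl a => Sum.inl '' M₁.δ q a
    | .inr q, .inr a => Sum.inr '' M₂.δ q a
    | _, _ => ∅
  δend := fun p => match p with
    | .inl q => match M₁.δend q with
      | .cont S => .cont (Sum.inl '' S)
      | .accept => .cont (Sum.inr '' M₂.I)
    | .inr q => match M₂.δend q with
      | .cont S => .cont (Sum.inr '' S)
      | .accept => .accept
  tr_compat := by
    rintro (q | q) (a | a) h
    · have ha : a ∈ M₁.τ q := by simpa using h
      show Sum.inl '' M₁.δ q a = ∅
      rw [M₁.tr_compat q a ha]; simp
    · rfl
    · rfl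
    · have ha : a ∈ M₂.τ q := by simpa using h
      show Sum.inr '' M₂.δ q a = ∅
      rw [M₂.tr_compat q a ha]; simp

@[simp] lemma shAut_tau_inl_inl {q : Q₁} {a : A₁} :
    Sum.inl a ∈ (shAut M₁ M₂).τ (Sum.inl q) ↔ a ∈ M₁.τ q := by
  simp [shAut]

@[simp] lemma shAut_tau_inl_inr (q : Q₁) (a : A₂) :
    Sum.inr a ∈ (shAut M₁ M₂).τ (Sum.inl q) := by
  simp [shAut]

@[simp] lemma shAut_tau_inr_inl (q : Q₂) (a : A₁) :
    Sum.inl a ∈ (shAut M₁ M₂).τ (Sum.inr q) := by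
  simp [shAut]

@[simp] lemma shAut_tau_inr_inr {q : Q₂} {a : A₂} :
    Sum.inr a ∈ (shAut M₁ M₂).τ (Sum.inr q) ↔ a ∈ M₂.τ q := by
  simp [shAut]

@[simp] lemma shAut_delta_inl_inl (q : Q₁) (a : A₁) :
    (shAut M₁ M₂).δ (Sum.inl q) (Sum.inl a) = Sum.inl '' M₁.δ q a := rfl

@[simp] lemma shAut_delta_inr_inr (q : Q₂) (a : A₂) :
    (shAut M₁ M₂).δ (Sum.inr q) (Sum.inr a) = Sum.inr '' M₂.δ q a := rfl

lemma shAut_dend_inl_cont {q : Q₁} {S : Set Q₁} (h : M₁.δend q = .cont S) :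
    (shAut M₁ M₂).δend (Sum.inl q) = .cont (Sum.inl '' S) := by
  show (match M₁.δend q with
      | .cont S => (.cont (Sum.inl '' S) : EndMove (Q₁ ⊕ Q₂))
      | .accept => .cont (Sum.inr '' M₂.I)) = _
  rw [h]

lemma shAut_dend_inl_accept {q : Q₁} (h : M₁.δend q = .accept) :
    (shAut M₁ M₂).δend (Sum.inl q) = .cont (Sum.inr '' M₂.I) := by
  show (match M₁.δend q with
      | .cont S => (.cont (Sum.inl '' S) : EndMove (Q₁ ⊕ Q₂))
      | .accept => .cont (Sum.inr '' M₂.I)) = _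
  rw [h]

lemma shAut_dend_inr_cont {q : Q₂} {S : Set Q₂} (h : M₂.δend q = .cont S) :
    (shAut M₁ M₂).δend (Sum.inr q) = .cont (Sum.inr '' S) := by
  show (match M₂.δend q with
      | .cont S => (.cont (Sum.inr '' S) : EndMove (Q₁ ⊕ Q₂))
      | .accept => .accept) = _
  rw [h]

lemma shAut_dend_inr_accept {q : Q₂} (h : M₂.δend q = .accept) :
    (shAut M₁ M₂).δend (Sum.inr q) = .accept := by
  show (match M₂.δend q with
      | .cont S => (.cont (Sum.inr '' S) : EndMove (Q₁ ⊕ Q₂))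
      | .accept => .accept) = _
  rw [h]

lemma transL_lift {q : Q₁} {U : List (A₁ ⊕ A₂)} (h : ∀ a ∈ projL U, a ∈ M₁.τ q) :
    ∀ b ∈ U, b ∈ (shAut M₁ M₂).τ (Sum.inl q) := by
  rintro (a | a) hb
  · exact (shAut_tau_inl_inl M₁ M₂).2 (h a (mem_projL.2 hb))
  · exact shAut_tau_inl_inr M₁ M₂ q a

lemma transL_proj {q : Q₁} {U : List (A₁ ⊕ A₂)}
    (h : ∀ b ∈ U, b ∈ (shAut M₁ M₂).τ (Sum.inl q)) : ∀ a ∈ projL U, a ∈ M₁.τ q :=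
  fun a ha => (shAut_tau_inl_inl M₁ M₂).1 (h _ (mem_projL.1 ha))

lemma transR_lift {q : Q₂} {U : List (A₁ ⊕ A₂)} (h : ∀ a ∈ projR U, a ∈ M₂.τ q) :
    ∀ b ∈ U, b ∈ (shAut M₁ M₂).τ (Sum.inr q) := by
  rintro (a | a) hb
  · exact shAut_tau_inr_inl M₁ M₂ q a
  · exact (shAut_tau_inr_inr M₁ M₂).2 (h a (mem_projR.2 hb))

lemma transR_proj {q : Q₂} {U : List (A₁ ⊕ A₂)}
    (h : ∀ b ∈ U, b ∈ (shAut M₁ M₂).τ (Sum.inr q)) : ∀ a ∈ projR U, a ∈ M₂.τ q :=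
  fun a ha => (shAut_tau_inr_inr M₁ M₂).1 (h _ (mem_projR.1 ha))

lemma rtg_accept {Q A : Type} {M : NrNFAwtl Q A} {d : NrConf Q A}
    (h : Relation.ReflTransGen M.Step .accept d) : d = .accept := by
  rcases h.cases_head with h | ⟨c, hc, -⟩
  · exact h.symm
  · cases hc

lemma decomp_accept {Q A : Type} {M : NrNFAwtl Q A} {x : List A} {q : Q} {w : List A}
    (h : Relation.ReflTransGen M.Step (.conf x q w) .accept) :
    ∃ x' q' w', Relation.ReflTransGen M.Step (.conf x q w) (.conf x' q' w') ∧
      (∀ b ∈ w', b ∈ M.τ q') ∧ M.δend q' = .accept := by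
  rcases h.cases_tail with h | ⟨b, hb, hstep⟩
  · exact (nomatch h)
  · cases b with
    | accept => cases hstep
    | conf x' q' w' =>
      refine ⟨x', q', w', hb, ?_⟩
      cases hstep with
      | accept X W Q h1 h2 => exact ⟨h1, h2⟩

/-- Lifting a computation of `M₁` to the shuffle automaton. -/
lemma lift1 {c₁ d₁ : NrConf Q₁ A₁} (h : Relation.ReflTransGen M₁.Step c₁ d₁) :
    ∀ (x w : List (A₁ ⊕ A₂)) (q p : Q₁) (y₁ z₁ : List A₁),
      c₁ = .conf (projL x) q (projL w) → d₁ = .conf y₁ p z₁ →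
      ∃ y z, projL y = y₁ ∧ projL z = z₁ ∧ projR y ++ projR z = projR x ++ projR w ∧
        Relation.ReflTransGen (shAut M₁ M₂).Step
          (.conf x (Sum.inl q) w) (.conf y (Sum.inl p) z) := by
  induction h using Relation.ReflTransGen.head_induction_on with
  | refl =>
    intro x w q p y₁ z₁ hc hd
    rw [hc] at hd
    obtain ⟨h1, h2, h3⟩ := NrConf.conf.inj hd
    subst h2
    exact ⟨x, w, h1, h3, rfl, Relation.ReflTransGen.refl⟩
  | head h' rest ih =>
    intro x w q p y₁ z₁ hc hd
    subst hc
    generalize hC : (NrConf.conf (projL x) q (projL w) : NrConf Q₁ A₁) = C at h'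
    cases h' with
    | read X Q Q' u v a htr hna hδ =>
      obtain ⟨e1, e2, e3⟩ := NrConf.conf.inj hC
      subst e2
      obtain ⟨U, V, rfl, hU, hV⟩ := projL_split e3
      have step : (shAut M₁ M₂).Step (.conf x (Sum.inl q) (U ++ Sum.inl a :: V))
          (.conf (x ++ U) (Sum.inl Q') V) :=
        NrNFAwtl.Step.read x (Sum.inl q) (Sum.inl Q') U V (Sum.inl a)
          (transL_lift M₁ M₂ (hU ▸ htr))
          (fun hmem => hna ((shAut_tau_inl_inl M₁ M₂).1 hmem))
          ⟨Q', hδ, rfl⟩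
      obtain ⟨y, z, hy, hz, hpr, run⟩ := ih (x ++ U) V Q' p y₁ z₁
        (by simp [← e1, hU, hV]) hd
      refine ⟨y, z, hy, hz, ?_, run.head step⟩
      rw [hpr]; simp
    | restart X W Q Q' S hw hend hq' =>
      obtain ⟨e1, e2, e3⟩ := NrConf.conf.inj hC
      subst e2
      have step : (shAut M₁ M₂).Step (.conf x (Sum.inl q) w)
          (.conf [] (Sum.inl Q') (x ++ w)) :=
        NrNFAwtl.Step.restart x w (Sum.inl q) (Sum.inl Q') (Sum.inl '' S)
          (transL_lift M₁ M₂ (e3 ▸ hw))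
          (shAut_dend_inl_cont M₁ M₂ hend) ⟨Q', hq', rfl⟩
      obtain ⟨y, z, hy, hz, hpr, run⟩ := ih [] (x ++ w) Q' p y₁ z₁
        (by simp [← e1, ← e3]) hd
      refine ⟨y, z, hy, hz, ?_, run.head step⟩
      rw [hpr]; simp
    | accept X W Q hw hend =>
      rw [rtg_accept rest] at hd
      exact (nomatch hd)

/-- Lifting a computation of `M₂` to the shuffle automaton. -/
lemma lift2 {c₂ : NrConf Q₂ A₂} (h : Relation.ReflTransGen M₂.Step c₂ .accept) :
    ∀ (x w : List (A₁ ⊕ A₂)) (q : Q₂),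
      c₂ = .conf (projR x) q (projR w) →
      Relation.ReflTransGen (shAut M₁ M₂).Step (.conf x (Sum.inr q) w) .accept := by
  induction h using Relation.ReflTransGen.head_induction_on with
  | refl =>
    intro x w q hc
    exact (nomatch hc)
  | head h' rest ih =>
    intro x w q hc
    subst hc
    generalize hC : (NrConf.conf (projR x) q (projR w) : NrConf Q₂ A₂) = C at h'
    cases h' with
    | read X Q Q' u v a htr hna hδ =>
      obtain ⟨e1, e2, e3⟩ := NrConf.conf.inj hC
      subst e2
      obtain ⟨U, V, rfl, hU, hV⟩ := projR_split e3
      have step : (shAut M₁ M₂).Step (.conf x (Sum.inr q) (U ++ Sum.inr a :: V))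
          (.conf (x ++ U) (Sum.inr Q') V) :=
        NrNFAwtl.Step.read x (Sum.inr q) (Sum.inr Q') U V (Sum.inr a)
          (transR_lift M₁ M₂ (hU ▸ htr))
          (fun hmem => hna ((shAut_tau_inr_inr M₁ M₂).1 hmem))
          ⟨Q', hδ, rfl⟩
      exact (ih (x ++ U) V Q' (by simp [← e1, hU, hV])).head step
    | restart X W Q Q' S hw hend hq' =>
      obtain ⟨e1, e2, e3⟩ := NrConf.conf.inj hC
      subst e2
      have step : (shAut M₁ M₂).Step (.conf x (Sum.inr q) w)
          (.conf [] (Sum.inr Q') (x ++ w)) :=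
        NrNFAwtl.Step.restart x w (Sum.inr q) (Sum.inr Q') (Sum.inr '' S)
          (transR_lift M₁ M₂ (e3 ▸ hw))
          (shAut_dend_inr_cont M₁ M₂ hend) ⟨Q', hq', rfl⟩
      exact (ih [] (x ++ w) Q' (by simp [← e1, ← e3])).head step
    | accept X W Q hw hend =>
      obtain ⟨e1, e2, e3⟩ := NrConf.conf.inj hC
      subst e2
      exact Relation.ReflTransGen.single
        (NrNFAwtl.Step.accept x w (Sum.inr q)
          (transR_lift M₁ M₂ (e3 ▸ hw))
          (shAut_dend_inr_accept M₁ M₂ hend))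

/-- Projecting an accepting computation of the shuffle automaton back to
computations of `M₁` and `M₂`. -/
lemma back {c : NrConf (Q₁ ⊕ Q₂) (A₁ ⊕ A₂)}
    (h : Relation.ReflTransGen (shAut M₁ M₂).Step c .accept) :
    (∀ x q w, c = .conf x (Sum.inl q) w →
        Relation.ReflTransGen M₁.Step (.conf (projL x) q (projL w)) .accept ∧
        ∃ q₀ ∈ M₂.I,
          Relation.ReflTransGen M₂.Step (.conf [] q₀ (projR x ++ projR w)) .accept) ∧
    (∀ x q w, c = .conf x (Sum.inr q) w →
        Relation.ReflTransGen M₂.Step (.conf (projR x) q (projR w)) .accept) := by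
  induction h using Relation.ReflTransGen.head_induction_on with
  | refl =>
    exact ⟨fun x q w hc => (nomatch hc),
           fun x q w hc => (nomatch hc)⟩
  | head h' rest ih =>
    constructor
    · intro x q w hc
      subst hc
      generalize hC : (NrConf.conf x (Sum.inl q) w : NrConf (Q₁ ⊕ Q₂) (A₁ ⊕ A₂)) = C at h'
      cases h' with
      | read X Q Q' u v b htr hnt hδ =>
        obtain ⟨e1, e2, e3⟩ := NrConf.conf.inj hC
        subst e1; subst e2; subst e3
        cases b with
        | inl a =>
          rw [shAut_delta_inl_inl] at hδ
          obtain ⟨p, hp, rfl⟩ := hδ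
          obtain ⟨run1, q₀, hq₀, run2⟩ := ih.1 (x ++ u) p v rfl
          constructor
          · have step1 : M₁.Step (.conf (projL x) q (projL u ++ a :: projL v))
                (.conf (projL x ++ projL u) p (projL v)) :=
              NrNFAwtl.Step.read (projL x) q p (projL u) (projL v) a
                (transL_proj M₁ M₂ htr)
                (fun hm => hnt ((shAut_tau_inl_inl M₁ M₂).2 hm)) hp
            have heq : projL (u ++ Sum.inl a :: v) = projL u ++ a :: projL v := by simp
            rw [heq]
            have run1' : Relation.ReflTransGen M₁.Step
                (.conf (projL x ++ projL u) p (projL v)) .accept := by simpa using run1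
            exact run1'.head step1
          · refine ⟨q₀, hq₀, ?_⟩
            have heq : projR (x ++ u) ++ projR v = projR x ++ projR (u ++ Sum.inl a :: v) := by
              simp
            rw [← heq]; exact run2
        | inr a => exact absurd (shAut_tau_inl_inr M₁ M₂ q a) hnt
      | restart X W Q Q' S hw hend hq' =>
        obtain ⟨e1, e2, e3⟩ := NrConf.conf.inj hC
        subst e1; subst e2; subst e3
        cases hM : M₁.δend q with
        | cont S₁ =>
          rw [shAut_dend_inl_cont M₁ M₂ hM] at hend
          obtain rfl := (EndMove.cont.inj hend)
          obtain ⟨p, hp, rfl⟩ := hq'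
          obtain ⟨run1, q₀, hq₀, run2⟩ := ih.1 [] p (x ++ w) rfl
          constructor
          · have step1 : M₁.Step (.conf (projL x) q (projL w))
                (.conf [] p (projL x ++ projL w)) :=
              NrNFAwtl.Step.restart (projL x) (projL w) q p S₁
                (transL_proj M₁ M₂ hw) hM hp
            have run1' : Relation.ReflTransGen M₁.Step
                (.conf [] p (projL x ++ projL w)) .accept := by simpa using run1
            exact run1'.head step1
          · refine ⟨q₀, hq₀, ?_⟩
            have heq : projR ([] : List (A₁ ⊕ A₂)) ++ projR (x ++ w)
                = projR x ++ projR w := by simp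
            rw [← heq]; exact run2
        | accept =>
          rw [shAut_dend_inl_accept M₁ M₂ hM] at hend
          obtain rfl := (EndMove.cont.inj hend)
          obtain ⟨q₀, hq₀, rfl⟩ := hq'
          have run2 := ih.2 [] q₀ (x ++ w) rfl
          refine ⟨Relation.ReflTransGen.single
            (NrNFAwtl.Step.accept (projL x) (projL w) q (transL_proj M₁ M₂ hw) hM),
            q₀, hq₀, ?_⟩
          simpa using run2
      | accept X W Q hw hend =>
        obtain ⟨e1, e2, e3⟩ := NrConf.conf.inj hC
        subst e1; subst e2; subst e3
        cases hM : M₁.δend q with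
        | cont S₁ =>
          rw [shAut_dend_inl_cont M₁ M₂ hM] at hend
          exact (nomatch hend)
        | accept =>
          rw [shAut_dend_inl_accept M₁ M₂ hM] at hend
          exact (nomatch hend)
    · intro x q w hc
      subst hc
      generalize hC : (NrConf.conf x (Sum.inr q) w : NrConf (Q₁ ⊕ Q₂) (A₁ ⊕ A₂)) = C at h'
      cases h' with
      | read X Q Q' u v b htr hnt hδ =>
        obtain ⟨e1, e2, e3⟩ := NrConf.conf.inj hC
        subst e1; subst e2; subst e3
        cases b with
        | inl a => exact absurd (shAut_tau_inr_inl M₁ M₂ q a) hnt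
        | inr a =>
          rw [shAut_delta_inr_inr] at hδ
          obtain ⟨p, hp, rfl⟩ := hδ
          have run := ih.2 (x ++ u) p v rfl
          have step1 : M₂.Step (.conf (projR x) q (projR u ++ a :: projR v))
              (.conf (projR x ++ projR u) p (projR v)) :=
            NrNFAwtl.Step.read (projR x) q p (projR u) (projR v) a
              (transR_proj M₁ M₂ htr)
              (fun hm => hnt ((shAut_tau_inr_inr M₁ M₂).2 hm)) hp
          have heq : projR (u ++ Sum.inr a :: v) = projR u ++ a :: projR v := by simp
          rw [heq]
          have run' : Relation.ReflTransGen M₂.Step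
              (.conf (projR x ++ projR u) p (projR v)) .accept := by simpa using run
          exact run'.head step1
      | restart X W Q Q' S hw hend hq' =>
        obtain ⟨e1, e2, e3⟩ := NrConf.conf.inj hC
        subst e1; subst e2; subst e3
        cases hM : M₂.δend q with
        | cont S₂ =>
          rw [shAut_dend_inr_cont M₁ M₂ hM] at hend
          obtain rfl := (EndMove.cont.inj hend)
          obtain ⟨p, hp, rfl⟩ := hq'
          have run := ih.2 [] p (x ++ w) rfl
          have step1 : M₂.Step (.conf (projR x) q (projR w))
              (.conf [] p (projR x ++ projR w)) :=
            NrNFAwtl.Step.restart (projR x) (projR w) q p S₂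
              (transR_proj M₁ M₂ hw) hM hp
          have run' : Relation.ReflTransGen M₂.Step
              (.conf [] p (projR x ++ projR w)) .accept := by simpa using run
          exact run'.head step1
        | accept =>
          rw [shAut_dend_inr_accept M₁ M₂ hM] at hend
          exact (nomatch hend)
      | accept X W Q hw hend =>
        obtain ⟨e1, e2, e3⟩ := NrConf.conf.inj hC
        subst e1; subst e2; subst e3
        cases hM : M₂.δend q with
        | cont S₂ =>
          rw [shAut_dend_inr_cont M₁ M₂ hM] at hend
          exact (nomatch hend)
        | accept =>
          exact Relation.ReflTransGen.single
            (NrNFAwtl.Step.accept (projR x) (projR w) q (transR_proj M₁ M₂ hw) hM)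

end ShuffleConstruction


/-- The class of languages accepted by nrNFAwtls is closed
under disjoint shuffle: if `L₁ ⊆ Σ₁*` and `L₂ ⊆ Σ₂*` are accepted by
nrNFAwtls and the alphabets `Σ₁`, `Σ₂` are disjoint (here: the two summands of
`Σ₁ ⊕ Σ₂`), then `sh(L₁, L₂)` is accepted by an nrNFAwtl. -/
theorem nrNFAwtl_closed_under_disjoint_shuffle
    {A₁ A₂ : Type} [Fintype A₁] [Fintype A₂]
    (L₁ : Set (List A₁)) (L₂ : Set (List A₂))
    (h₁ : AcceptedByNrNFAwtl L₁) (h₂ : AcceptedByNrNFAwtl L₂) :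
    AcceptedByNrNFAwtl { z : List (A₁ ⊕ A₂) | ∃ u ∈ L₁, ∃ v ∈ L₂,
      IsShuffle (u.map Sum.inl) (v.map Sum.inr) z } := by
  obtain ⟨Q₁, i₁, M₁, rfl⟩ := h₁
  obtain ⟨Q₂, i₂, M₂, rfl⟩ := h₂
  refine ⟨Q₁ ⊕ Q₂, inferInstance, shAut M₁ M₂, ?_⟩
  ext z
  simp only [NrNFAwtl.lang, Set.mem_setOf_eq]
  constructor
  · rintro ⟨q₀, hq₀, run⟩
    obtain ⟨p, hp, rfl⟩ := hq₀
    obtain ⟨run1, q₀', hq₀', run2⟩ := (back M₁ M₂ run).1 [] p z rfl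
    exact ⟨projL z, ⟨p, hp, by simpa using run1⟩,
      projR z, ⟨q₀', hq₀', by simpa using run2⟩, shuffle_self z⟩
  · rintro ⟨u, ⟨p, hp, run1⟩, v, ⟨q, hq, run2⟩, hsh⟩
    have hzl := shuffle_projL hsh
    have hzr := shuffle_projR hsh
    obtain ⟨x₁, qf, w₁, runc, hwtr, hend⟩ := decomp_accept run1
    obtain ⟨y, z', hy, hz', hpr, lifted⟩ := lift1 M₁ M₂ runc [] z p qf x₁ w₁
      (by simp [hzl]) rfl
    have hswitch : (shAut M₁ M₂).Step (.conf y (Sum.inl qf) z')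
        (.conf [] (Sum.inr q) (y ++ z')) :=
      NrNFAwtl.Step.restart y z' (Sum.inl qf) (Sum.inr q) (Sum.inr '' M₂.I)
        (transL_lift M₁ M₂ (fun a ha => hwtr a (hz' ▸ ha)))
        (shAut_dend_inl_accept M₁ M₂ hend) ⟨q, hq, rfl⟩
    have h5 : projR y ++ projR z' = projR z := by simpa using hpr
    have tail := lift2 M₁ M₂ run2 [] (y ++ z') q (by simp [h5, hzr])
    exact ⟨Sum.inl p, ⟨p, hp, rfl⟩,
      lifted.trans (Relation.ReflTransGen.head hswitch tail)⟩
end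

section
/- If L ⊆ Σ* is accepted by an nrDFAwtl, then the complement Σ* \ L is accepted by an nrDFAwtl; i.e., the class of languages accepted by nrDFAwtls is closed under complementation. -/
namespace ComplClosureAux
open Relation

variable {α : Type}

theorem reach_terminal {R : α → α → Prop}
    (hf : ∀ {a b c : α}, R a b → R a c → b = c)
    {t : α} (ht : ∀ c, ¬ R t c) {a b : α}
    (hab : ReflTransGen R a b) (hat : ReflTransGen R a t) : ReflTransGen R b t := by
  induction hab with
  | refl => exact hat
  | tail hab' hstep ih =>
      rcases ih.cases_head with rfl | ⟨c, hc, hct⟩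
      · exact absurd hstep (ht _)
      · rwa [hf hc hstep] at hct

theorem not_reach_terminal_of_cycle {R : α → α → Prop}
    (hf : ∀ {a b c : α}, R a b → R a c → b = c)
    {t : α} (ht : ∀ c, ¬ R t c) {d : α}
    (hdt : ReflTransGen R d t) (hdd : TransGen R d d) : False := by
  revert hdd
  induction hdt using Relation.ReflTransGen.head_induction_on with
  | refl => intro htt; rcases Relation.TransGen.head'_iff.mp htt with ⟨c, hc, _⟩; exact ht _ hc
  | head hac hcb ih =>
      intro haa
      rcases Relation.TransGen.head'_iff.mp haa with ⟨e, hae, hea⟩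
      rw [hf hae hac] at hea
      exact ih (Relation.TransGen.tail' hea hac)

theorem first_nontr_unique {P : α → Prop} :
    ∀ {u₁ : List α} {a₁ : α} {v₁ u₂ a₂ v₂}, (∀ b ∈ u₁, P b) → ¬ P a₁ →
    (∀ b ∈ u₂, P b) → ¬ P a₂ → u₁ ++ a₁ :: v₁ = u₂ ++ a₂ :: v₂ →
    u₁ = u₂ ∧ a₁ = a₂ ∧ v₁ = v₂ := by
  intro u₁
  induction u₁ with
  | nil =>
      intro a₁ v₁ u₂ a₂ v₂ _ h2 h3 _ heq
      cases u₂ with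
      | nil => simpa using heq
      | cons b t =>
          simp only [List.nil_append, List.cons_append, List.cons.injEq] at heq
          exact absurd (heq.1 ▸ h3 b (by simp)) h2
  | cons b t ih =>
      intro a₁ v₁ u₂ a₂ v₂ h1 h2 h3 h4 heq
      cases u₂ with
      | nil =>
          simp only [List.cons_append, List.nil_append, List.cons.injEq] at heq
          exact absurd (heq.1 ▸ h1 b (by simp)) h4
      | cons b' t' =>
          simp only [List.cons_append, List.cons.injEq] at heq
          obtain ⟨rfl, heq⟩ := heq
          obtain ⟨rfl, rfl, rfl⟩ := ih (fun x hx => h1 x (by simp [hx])) h2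
            (fun x hx => h3 x (by simp [hx])) h4 heq
          exact ⟨rfl, rfl, rfl⟩

theorem exists_split {P : α → Prop} : ∀ {w : List α}, ¬ (∀ b ∈ w, P b) →
    ∃ u a v, w = u ++ a :: v ∧ (∀ b ∈ u, P b) ∧ ¬ P a := by
  intro w
  induction w with
  | nil => intro h; exact absurd (by simp) h
  | cons b t ih =>
      intro h
      by_cases hb : P b
      · have ht : ¬ (∀ x ∈ t, P x) := fun ht => h (by
          intro x hx
          rcases List.mem_cons.mp hx with rfl | hx
          · exact hb
          · exact ht x hx)
        obtain ⟨u, a, v, rfl, hu, ha⟩ := ih ht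
        exact ⟨b :: u, a, v, rfl, by
          intro x hx
          rcases List.mem_cons.mp hx with rfl | hx
          · exact hb
          · exact hu x hx, ha⟩
      · exact ⟨[], b, t, rfl, by simp, hb⟩

end ComplClosureAux

namespace ComplClosureAux
open Relation NrNFAwtl

variable {Q A : Type}

theorem step_cases {M : NrNFAwtl Q A} {c d : NrConf Q A} (h : M.Step c d) :
    (∃ x q q' u v a, c = .conf x q (u ++ a :: v) ∧ d = .conf (x ++ u) q' v ∧
      (∀ b ∈ u, b ∈ M.τ q) ∧ a ∉ M.τ q ∧ q' ∈ M.δ q a) ∨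
    (∃ x w q q' S, c = .conf x q w ∧ d = .conf [] q' (x ++ w) ∧
      (∀ b ∈ w, b ∈ M.τ q) ∧ M.δend q = .cont S ∧ q' ∈ S) ∨
    (∃ x w q, c = .conf x q w ∧ d = .accept ∧
      (∀ b ∈ w, b ∈ M.τ q) ∧ M.δend q = .accept) := by
  cases h with
  | read x q q' u v a h1 h2 h3 => exact Or.inl ⟨x, q, q', u, v, a, rfl, rfl, h1, h2, h3⟩
  | restart x w q q' S h1 h2 h3 => exact Or.inr (Or.inl ⟨x, w, q, q', S, rfl, rfl, h1, h2, h3⟩)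
  | accept x w q h1 h2 => exact Or.inr (Or.inr ⟨x, w, q, rfl, rfl, h1, h2⟩)

theorem accept_terminal {M : NrNFAwtl Q A} {d : NrConf Q A} :
    ¬ M.Step .accept d := by
  intro h
  rcases step_cases h with ⟨_,_,_,_,_,_,hc,_⟩ | ⟨_,_,_,_,_,hc,_⟩ | ⟨_,_,_,hc,_⟩ <;> exact
    (by cases hc)

theorem step_det {M : NrNFAwtl Q A} (hdet : M.IsDet) {c d₁ d₂ : NrConf Q A}
    (h1 : M.Step c d₁) (h2 : M.Step c d₂) : d₁ = d₂ := by
  rcases step_cases h1 with ⟨x,q,q',u,v,a,hc₁,hd₁,hu,ha,hq'⟩ |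
      ⟨x,w,q,q',S,hc₁,hd₁,hw,hE,hq'⟩ | ⟨x,w,q,hc₁,hd₁,hw,hE⟩ <;>
    rcases step_cases h2 with ⟨x₂,q₂,q₂',u₂,v₂,a₂,hc₂,hd₂,hu₂,ha₂,hq₂'⟩ |
      ⟨x₂,w₂,q₂,q₂',S₂,hc₂,hd₂,hw₂,hE₂,hq₂'⟩ | ⟨x₂,w₂,q₂,hc₂,hd₂,hw₂,hE₂⟩ <;>
    obtain ⟨hx, hq, hl⟩ := NrConf.conf.inj (hc₁.symm.trans hc₂) <;>
    (try subst hx) <;> (try subst hq)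
  · obtain ⟨hu', ha', hv'⟩ := first_nontr_unique hu ha hu₂ ha₂ hl
    subst hu'; subst ha'; subst hv'
    rw [hd₁, hd₂, hdet.2.1 _ _ hq' hq₂']
  · exact absurd (hw₂ a (by rw [← hl]; simp)) ha
  · exact absurd (hw₂ a (by rw [← hl]; simp)) ha
  · exact absurd (hw a₂ (by rw [hl]; simp)) ha₂
  · subst hl
    rw [hE] at hE₂
    obtain rfl := EndMove.cont.inj hE₂
    rw [hd₁, hd₂, hdet.2.2 _ _ hE hq' hq₂']
  · subst hl; rw [hE] at hE₂; exact absurd hE₂ (by simp)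
  · exact absurd (hw a₂ (by rw [hl]; simp)) ha₂
  · subst hl; rw [hE] at hE₂; exact absurd hE₂ (by simp)
  · rw [hd₁, hd₂]

end ComplClosureAux

namespace ComplClosureAux

variable (M : NrNFAwtl Q A) (q0 : Q)

open Classical in
/-- transition function of the complement automaton -/
noncomputable def cδ : (Q × Finset Q) ⊕ Unit → A → Set ((Q × Finset Q) ⊕ Unit)
  | .inr _, _ => ∅
  | .inl (q, _), a =>
      if a ∈ M.τ q then ∅
      else if M.δ q a = ∅ then {.inr ()}
      else (fun q' => .inl (q', (∅ : Finset Q))) '' M.δ q a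

open Classical in
/-- end-of-tape function of the complement automaton -/
noncomputable def cend : (Q × Finset Q) ⊕ Unit → EndMove ((Q × Finset Q) ⊕ Unit)
  | .inr _ => .accept
  | .inl (q, S) =>
      match M.δend q with
      | .accept => .cont ∅
      | .cont S₀ =>
          if S₀ = ∅ ∨ q ∈ S then .accept
          else .cont ((fun q' => Sum.inl (q', insert q S)) '' S₀)

/-- translucency of the complement automaton -/
def cτ : (Q × Finset Q) ⊕ Unit → Set A
  | .inr _ => Set.univ
  | .inl (q, _) => M.τ q

/-- the complement automaton -/
noncomputable def compl : NrNFAwtl ((Q × Finset Q) ⊕ Unit) A where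
  τ := cτ M
  I := {.inl (q0, ∅)}
  δ := cδ M
  δend := cend M
  tr_compat := by
    rintro (⟨q, S⟩ | u) a ha
    · have ha' : a ∈ M.τ q := ha
      simp only [cδ]
      rw [if_pos ha']
    · rfl

theorem compl_τ : (compl M q0).τ = cτ M := rfl
theorem compl_δ : (compl M q0).δ = cδ M := rfl
theorem compl_δend : (compl M q0).δend = cend M := rfl
theorem compl_I : (compl M q0).I = {.inl (q0, ∅)} := rfl

theorem cδ_tr {q : Q} {S : Finset Q} {a : A} (ha : a ∈ M.τ q) :
    cδ M (.inl (q, S)) a = ∅ := by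
  simp only [cδ]; rw [if_pos ha]

theorem cδ_stuck {q : Q} {S : Finset Q} {a : A} (ha : a ∉ M.τ q) (h : M.δ q a = ∅) :
    cδ M (.inl (q, S)) a = {.inr ()} := by
  simp only [cδ]; rw [if_neg ha, if_pos h]

theorem cδ_go {q : Q} {S : Finset Q} {a : A} (ha : a ∉ M.τ q) (h : M.δ q a ≠ ∅) :
    cδ M (.inl (q, S)) a = (fun q' => Sum.inl (q', (∅ : Finset Q))) '' M.δ q a := by
  simp only [cδ]; rw [if_neg ha, if_neg h]

theorem cend_acc {q : Q} {S : Finset Q} (hE : M.δend q = .accept) :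
    cend M (.inl (q, S)) = .cont ∅ := by
  simp only [cend]; rw [hE]

theorem cend_stop {q : Q} {S : Finset Q} {S₀ : Set Q} (hE : M.δend q = .cont S₀)
    (h : S₀ = ∅ ∨ q ∈ S) : cend M (.inl (q, S)) = .accept := by
  simp only [cend]; rw [hE]; exact if_pos h

open Classical in
theorem cend_go {q : Q} {S : Finset Q} {S₀ : Set Q} (hE : M.δend q = .cont S₀)
    (h : ¬ (S₀ = ∅ ∨ q ∈ S)) :
    cend M (.inl (q, S)) = .cont ((fun q' => Sum.inl (q', insert q S)) '' S₀) := by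
  simp only [cend]; rw [hE]; exact if_neg h

theorem compl_isDet (hdet : M.IsDet) : (compl M q0).IsDet := by
  refine ⟨⟨.inl (q0, ∅), rfl⟩, ?_, ?_⟩
  · rintro (⟨q, S⟩ | u) a
    · show (cδ M (Sum.inl (q, S)) a).Subsingleton
      by_cases ha : a ∈ M.τ q
      · rw [cδ_tr M ha]; exact Set.subsingleton_empty
      · by_cases h : M.δ q a = ∅
        · rw [cδ_stuck M ha h]; exact Set.subsingleton_singleton
        · rw [cδ_go M ha h]; exact (hdet.2.1 q a).image _
    · exact Set.subsingleton_empty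
  · rintro (⟨q, S⟩ | u) T hT
    · have hT' : cend M (.inl (q, S)) = .cont T := hT
      rcases hE : M.δend q with S₀ | _
      · by_cases h : S₀ = ∅ ∨ q ∈ S
        · rw [cend_stop M hE h] at hT'; exact absurd hT' (by simp)
        · rw [cend_go M hE h] at hT'
          obtain rfl := EndMove.cont.inj hT'
          exact (hdet.2.2 q S₀ hE).image _
      · rw [cend_acc M hE] at hT'
        obtain rfl := EndMove.cont.inj hT'
        exact Set.subsingleton_empty
    · have hT' : cend M (.inr u) = .cont T := hT
      exact absurd hT' (by simp [cend])

end ComplClosureAux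

namespace ComplClosureAux
open Relation NrNFAwtl

variable {Q A : Type}

theorem stuck_read {M : NrNFAwtl Q A} {x : List A} {q : Q} {u v : List A} {a : A}
    (hu : ∀ b ∈ u, b ∈ M.τ q) (ha : a ∉ M.τ q) (hδ : M.δ q a = ∅) (d : NrConf Q A) :
    ¬ M.Step (.conf x q (u ++ a :: v)) d := by
  intro h
  rcases step_cases h with ⟨x₂,q₂,q₂',u₂,v₂,a₂,hc₂,_,hu₂,ha₂,hq₂'⟩ |
      ⟨x₂,w₂,q₂,q₂',S₂,hc₂,_,hw₂,_,_⟩ | ⟨x₂,w₂,q₂,hc₂,_,hw₂,_⟩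
  · obtain ⟨hx, hq, hl⟩ := NrConf.conf.inj hc₂
    subst hx; subst hq
    obtain ⟨_, ha', _⟩ := first_nontr_unique hu ha hu₂ ha₂ hl
    subst ha'
    rw [hδ] at hq₂'
    exact hq₂'
  · obtain ⟨hx, hq, hl⟩ := NrConf.conf.inj hc₂
    subst hx; subst hq
    exact absurd (hw₂ a (by rw [← hl]; simp)) ha
  · obtain ⟨hx, hq, hl⟩ := NrConf.conf.inj hc₂
    subst hx; subst hq
    exact absurd (hw₂ a (by rw [← hl]; simp)) ha

theorem stuck_end {M : NrNFAwtl Q A} {x : List A} {q : Q} {w : List A}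
    (hw : ∀ b ∈ w, b ∈ M.τ q) (hE : M.δend q = .cont ∅) (d : NrConf Q A) :
    ¬ M.Step (.conf x q w) d := by
  intro h
  rcases step_cases h with ⟨x₂,q₂,q₂',u₂,v₂,a₂,hc₂,_,hu₂,ha₂,hq₂'⟩ |
      ⟨x₂,w₂,q₂,q₂',S₂,hc₂,_,hw₂,hE₂,hq₂'⟩ | ⟨x₂,w₂,q₂,hc₂,_,hw₂,hE₂⟩
  · obtain ⟨hx, hq, hl⟩ := NrConf.conf.inj hc₂
    subst hx; subst hq
    exact absurd (hw a₂ (by rw [hl]; simp)) ha₂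
  · obtain ⟨hx, hq, hl⟩ := NrConf.conf.inj hc₂
    subst hx; subst hq
    rw [hE] at hE₂
    obtain rfl := (EndMove.cont.inj hE₂).symm
    exact hq₂'
  · obtain ⟨hx, hq, hl⟩ := NrConf.conf.inj hc₂
    subst hx; subst hq
    rw [hE] at hE₂
    exact absurd hE₂ (by simp)

theorem not_acc_of_stuck {M : NrNFAwtl Q A} (hdet : M.IsDet) {q0 : Q} {w₀ : List A}
    {c : NrConf Q A} (hr : ReflTransGen M.Step (.conf [] q0 w₀) c) (hc : c ≠ .accept)
    (hstuck : ∀ d, ¬ M.Step c d) :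
    ¬ ReflTransGen M.Step (.conf [] q0 w₀) .accept := by
  intro hacc
  have h := reach_terminal (R := M.Step) (t := NrConf.accept)
    (fun h1 h2 => step_det hdet h1 h2) (fun d => accept_terminal) hr hacc
  rcases h.cases_head with h | ⟨e, he, _⟩
  · exact hc h
  · exact hstuck e he

theorem not_acc_of_cycle {M : NrNFAwtl Q A} (hdet : M.IsDet) {q0 : Q} {w₀ : List A}
    {d : NrConf Q A} (hr : ReflTransGen M.Step (.conf [] q0 w₀) d)
    (hcyc : TransGen M.Step d d) :
    ¬ ReflTransGen M.Step (.conf [] q0 w₀) .accept := by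
  intro hacc
  exact not_reach_terminal_of_cycle (R := M.Step) (t := NrConf.accept)
    (fun h1 h2 => step_det hdet h1 h2) (fun d => accept_terminal)
    (reach_terminal (R := M.Step) (t := NrConf.accept)
      (fun h1 h2 => step_det hdet h1 h2) (fun d => accept_terminal) hr hacc)
    hcyc

variable (M : NrNFAwtl Q A) (q0 : Q)

/-- invariant maintained by the complement automaton -/
def Inv (w₀ : List A) : NrConf ((Q × Finset Q) ⊕ Unit) A → Prop
  | .conf x (.inl (q, S)) w =>
      ReflTransGen M.Step (.conf [] q0 w₀) (.conf x q w) ∧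
      ∀ p ∈ S, ∃ xp wp, (∀ b ∈ wp, b ∈ M.τ p) ∧ xp ++ wp = x ++ w ∧
        TransGen M.Step (.conf xp p wp) (.conf x q w)
  | .conf _ (.inr _) _ => ¬ ReflTransGen M.Step (.conf [] q0 w₀) .accept
  | .accept => ¬ ReflTransGen M.Step (.conf [] q0 w₀) .accept

end ComplClosureAux

namespace ComplClosureAux
open Relation NrNFAwtl

variable {Q A : Type} (M : NrNFAwtl Q A) (q0 : Q)

theorem inv_preserved (hdet : M.IsDet) {w₀ : List A}
    {c d : NrConf ((Q × Finset Q) ⊕ Unit) A} (hc : Inv M q0 w₀ c)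
    (h : (compl M q0).Step c d) : Inv M q0 w₀ d := by
  classical
  rcases step_cases h with ⟨x,s,s',u,v,a,rfl,rfl,hu,ha,hs'⟩ |
      ⟨x,w,s,s',T,rfl,rfl,hw,hE,hs'⟩ | ⟨x,w,s,rfl,rfl,hw,hE⟩
  · -- read step
    rcases s with ⟨q, S⟩ | uu
    · obtain ⟨hreach, hchain⟩ := hc
      have hu' : ∀ b ∈ u, b ∈ M.τ q := hu
      have ha' : a ∉ M.τ q := ha
      by_cases hδ : M.δ q a = ∅
      · rw [compl_δ, cδ_stuck M ha' hδ] at hs'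
        obtain rfl := Set.mem_singleton_iff.mp hs'
        exact not_acc_of_stuck hdet hreach (by simp) (stuck_read hu' ha' hδ)
      · rw [compl_δ, cδ_go M ha' hδ] at hs'
        obtain ⟨q', hq', rfl⟩ := hs'
        exact ⟨hreach.tail (Step.read x q q' u v a hu' ha' hq'),
          fun p hp => absurd hp (Finset.notMem_empty p)⟩
    · exact absurd (Set.mem_univ a) ha
  · -- restart step
    rcases s with ⟨q, S⟩ | uu
    · obtain ⟨hreach, hchain⟩ := hc
      have hw' : ∀ b ∈ w, b ∈ M.τ q := hw
      rcases hE0 : M.δend q with S₀ | _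
      · by_cases hcond : S₀ = ∅ ∨ q ∈ S
        · rw [compl_δend, cend_stop M hE0 hcond] at hE
          exact absurd hE (by simp)
        · rw [compl_δend, cend_go M hE0 hcond] at hE
          obtain rfl := EndMove.cont.inj hE
          obtain ⟨q', hq', rfl⟩ := hs'
          have hstep : M.Step (.conf x q w) (.conf [] q' (x ++ w)) :=
            Step.restart x w q q' S₀ hw' hE0 hq'
          refine ⟨hreach.tail hstep, ?_⟩
          intro p hp
          rcases Finset.mem_insert.mp hp with rfl | hp
          · exact ⟨x, w, hw', by simp, TransGen.single hstep⟩
          · obtain ⟨xp, wp, hwp, heqp, htgp⟩ := hchain p hp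
            exact ⟨xp, wp, hwp, by simp [heqp], htgp.tail hstep⟩
      · rw [compl_δend, cend_acc M hE0] at hE
        obtain rfl := EndMove.cont.inj hE
        exact absurd hs' (by simp)
    · rw [compl_δend] at hE
      exact absurd hE (by simp [cend])
  · -- accept step
    rcases s with ⟨q, S⟩ | uu
    · obtain ⟨hreach, hchain⟩ := hc
      have hw' : ∀ b ∈ w, b ∈ M.τ q := hw
      rcases hE0 : M.δend q with S₀ | _
      · by_cases hcond : S₀ = ∅ ∨ q ∈ S
        · rcases hcond with rfl | hqS
          · exact not_acc_of_stuck hdet hreach (by simp) (stuck_end hw' hE0)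
          · obtain ⟨xq, wq, hwq, heq, htg⟩ := hchain q hqS
            obtain ⟨e, he, her⟩ := Relation.TransGen.head'_iff.mp htg
            rcases step_cases he with ⟨x₂,q₂,q₂',u₂,v₂,a₂,hc₂,rfl,hu₂,ha₂,hq₂'⟩ |
                ⟨x₂,w₂,q₂,q₂',S₂,hc₂,rfl,hw₂,hE₂,hq₂'⟩ | ⟨x₂,w₂,q₂,hc₂,rfl,hw₂,hE₂⟩
            · obtain ⟨hx, hq, hl⟩ := NrConf.conf.inj hc₂
              subst hx; subst hq
              exact absurd (hwq a₂ (by rw [hl]; simp)) ha₂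
            · obtain ⟨hx, hq, hl⟩ := NrConf.conf.inj hc₂
              subst hx; subst hq; subst hl
              rw [hE0] at hE₂
              obtain rfl := EndMove.cont.inj hE₂
              have hstep : M.Step (.conf x q w) (.conf [] q₂' (x ++ w)) :=
                Step.restart x w q q₂' S₀ hw' hE0 hq₂'
              rw [heq] at her
              exact not_acc_of_cycle hdet (hreach.tail hstep)
                (Relation.TransGen.tail' her hstep)
            · obtain ⟨hx, hq, hl⟩ := NrConf.conf.inj hc₂
              subst hq
              rw [hE0] at hE₂
              exact absurd hE₂ (by simp)
        · rw [compl_δend, cend_go M hE0 hcond] at hE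
          exact absurd hE (by simp)
      · rw [compl_δend, cend_acc M hE0] at hE
        exact absurd hE (by simp)
    · exact hc

end ComplClosureAux

namespace ComplClosureAux
open Relation NrNFAwtl

variable {Q A : Type} [Fintype Q] (M : NrNFAwtl Q A) (q0 : Q)

theorem arith1 (P c s : ℕ) (hs : s ≤ c) : P + (c + 1 - 0) < P + (c + 1) + (c + 1 - s) := by
  omega

theorem arith2 (P c s : ℕ) (hs : s ≤ c) : P + (c + 1 - (s + 1)) < P + (c + 1 - s) := by
  omega

theorem progress {w₀ : List A}
    (hna : ¬ ReflTransGen M.Step (.conf [] q0 w₀) .accept) (n : ℕ) :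
    ∀ (x : List A) (q : Q) (S : Finset Q) (w : List A),
    (x.length + w.length) * (Fintype.card Q + 1) + (Fintype.card Q + 1 - S.card) < n →
    ReflTransGen M.Step (.conf [] q0 w₀) (.conf x q w) →
    ReflTransGen (compl M q0).Step (.conf x (Sum.inl (q, S)) w) .accept := by
  classical
  induction n with
  | zero => intro x q S w hn _; exact absurd hn (by omega)
  | succ n ih =>
    intro x q S w hn hreach
    have hSC : S.card ≤ Fintype.card Q := by
      simpa using Finset.card_le_card (Finset.subset_univ S)
    by_cases hw : ∀ b ∈ w, b ∈ M.τ q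
    · rcases hE0 : M.δend q with S₀ | _
      · by_cases hcond : S₀ = ∅ ∨ q ∈ S
        · exact ReflTransGen.single (Step.accept x w (Sum.inl (q, S)) hw
            (by rw [compl_δend]; exact cend_stop M hE0 hcond))
        · have hS₀ne : S₀ ≠ ∅ := fun h => hcond (Or.inl h)
          have hqS : q ∉ S := fun h => hcond (Or.inr h)
          obtain ⟨q', hq'⟩ := Set.nonempty_iff_ne_empty.mpr hS₀ne
          have hstep : (compl M q0).Step (.conf x (Sum.inl (q, S)) w)
              (.conf [] (Sum.inl (q', insert q S)) (x ++ w)) :=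
            Step.restart x w (Sum.inl (q, S)) (Sum.inl (q', insert q S))
              ((fun p => Sum.inl (p, insert q S)) '' S₀) hw
              (by rw [compl_δend]; exact cend_go M hE0 hcond)
              ⟨q', hq', rfl⟩
          have hstepM : M.Step (.conf x q w) (.conf [] q' (x ++ w)) :=
            Step.restart x w q q' S₀ hw hE0 hq'
          refine ReflTransGen.head hstep (ih [] q' (insert q S) (x ++ w) ?_ (hreach.tail hstepM))
          have hlen : (List.nil (α := A)).length + (x ++ w).length = x.length + w.length := by
            simp
          have hcard : (insert q S).card = S.card + 1 := Finset.card_insert_of_notMem hqS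
          rw [hlen, hcard]
          have := arith2 ((x.length + w.length) * (Fintype.card Q + 1))
            (Fintype.card Q) S.card hSC
          omega
      · exact absurd (hreach.tail (Step.accept x w q hw hE0)) hna
    · obtain ⟨u, a, v, rfl, hu, ha⟩ := exists_split hw
      by_cases hδ : M.δ q a = ∅
      · have hstep : (compl M q0).Step (.conf x (Sum.inl (q, S)) (u ++ a :: v))
            (.conf (x ++ u) (Sum.inr ()) v) :=
          Step.read x (Sum.inl (q, S)) (Sum.inr ()) u v a hu ha
            (by rw [compl_δ, cδ_stuck M ha hδ]; rfl)
        have hstep2 : (compl M q0).Step (.conf (x ++ u) (Sum.inr ()) v) .accept :=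
          Step.accept (x ++ u) v (Sum.inr ()) (fun b _ => Set.mem_univ b) rfl
        exact ReflTransGen.head hstep (ReflTransGen.single hstep2)
      · obtain ⟨q', hq'⟩ := Set.nonempty_iff_ne_empty.mpr hδ
        have hstep : (compl M q0).Step (.conf x (Sum.inl (q, S)) (u ++ a :: v))
            (.conf (x ++ u) (Sum.inl (q', ∅)) v) :=
          Step.read x (Sum.inl (q, S)) (Sum.inl (q', ∅)) u v a hu ha
            (by rw [compl_δ, cδ_go M ha hδ]; exact ⟨q', hq', rfl⟩)
        have hstepM : M.Step (.conf x q (u ++ a :: v)) (.conf (x ++ u) q' v) :=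
          Step.read x q q' u v a hu ha hq'
        refine ReflTransGen.head hstep (ih (x ++ u) q' ∅ v ?_ (hreach.tail hstepM))
        have hlen2 : x.length + (u ++ a :: v).length =
            x.length + u.length + v.length + 1 := by
          simp only [List.length_cons, List.length_append]; omega
        have hP : (x.length + u.length + v.length + 1) * (Fintype.card Q + 1) =
            (x.length + u.length + v.length) * (Fintype.card Q + 1) + (Fintype.card Q + 1) := by
          ring
        rw [hlen2, hP] at hn
        have hlen1 : (x ++ u).length + v.length = x.length + u.length + v.length := by
          simp only [List.length_append]
        rw [hlen1]
        simp only [Finset.card_empty]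
        omega

end ComplClosureAux

theorem nrDFAwtl_closed_under_complement' {A : Type} [Fintype A]
    (L : Set (List A)) (h : AcceptedByNrDFAwtl L) :
    AcceptedByNrDFAwtl Lᶜ := by
  classical
  obtain ⟨Q, instQ, M, hdet, hL⟩ := h
  subst hL
  obtain ⟨q0, hI⟩ := hdet.1
  haveI := instQ
  refine ⟨(Q × Finset Q) ⊕ Unit, inferInstance, ComplClosureAux.compl M q0,
    ComplClosureAux.compl_isDet M q0 hdet, ?_⟩
  ext w
  simp only [NrNFAwtl.lang, Set.mem_setOf_eq, Set.mem_compl_iff]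
  have hrtg : ∀ c d, Relation.ReflTransGen (ComplClosureAux.compl M q0).Step c d →
      ComplClosureAux.Inv M q0 w c → ComplClosureAux.Inv M q0 w d := by
    intro c d hcd
    induction hcd with
    | refl => exact id
    | tail _ h2 ih => exact fun hc => ComplClosureAux.inv_preserved M q0 hdet (ih hc) h2
  constructor
  · rintro ⟨p, hp, hrun⟩
    obtain rfl := Set.mem_singleton_iff.mp hp
    have hinv0 : ComplClosureAux.Inv M q0 w (.conf [] (Sum.inl (q0, ∅)) w) :=
      ⟨Relation.ReflTransGen.refl, fun p hp => absurd hp (Finset.notMem_empty p)⟩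
    have hfin : ComplClosureAux.Inv M q0 w .accept := hrtg _ _ hrun hinv0
    rintro ⟨p, hp, hacc⟩
    rw [hI] at hp
    obtain rfl := Set.mem_singleton_iff.mp hp
    exact hfin hacc
  · intro hna
    have hna' : ¬ Relation.ReflTransGen M.Step (.conf [] q0 w) .accept :=
      fun hacc => hna ⟨q0, by rw [hI]; rfl, hacc⟩
    refine ⟨Sum.inl (q0, ∅), rfl, ?_⟩
    exact ComplClosureAux.progress M q0 hna'
      ((((List.nil (α := A)).length + w.length) * (Fintype.card Q + 1) +
        (Fintype.card Q + 1 - (∅ : Finset Q).card)) + 1)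
      [] q0 ∅ w (Nat.lt_succ_self _) Relation.ReflTransGen.refl
/-- The class of languages accepted by nrDFAwtls is closed
under complementation. -/
theorem nrDFAwtl_closed_under_complement {A : Type} [Fintype A]
    (L : Set (List A)) (h : AcceptedByNrDFAwtl L) :
    AcceptedByNrDFAwtl Lᶜ := by
  exact nrDFAwtl_closed_under_complement' L h
end
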